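/- Let F, G, h̃₁, h̃₂ ∈ 𝒢 satisfy G∘h̃₁ = F∘h̃₂. Then there exist h₁, h₂ ∈ 𝒢 such that (1) G∘h₁ = F∘h₂ on [0,1], and (2) for every t ∈ [0,1] there exists u ∈ [0,1] with h₁(u) = t and h₂(u) = F†(G(t)); i.e., the graph of F†∘G is contained in the image of the curve u ↦ (h₁(u), h₂(u)). -/

import Mathlib

open Set MeasureTheory

/-- `g` is piecewise-C¹ on `[0,1]`: continuous, differentiable except at finitely many
points, with derivative continuous off that finite exceptional set. -/
def PiecewiseC1 (g : ℝ → ℝ) : Prop :=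
  ContinuousOn g (Set.Icc 0 1) ∧
  ∃ S : Finset ℝ,
    (∀ x ∈ Set.Icc (0:ℝ) 1 \ S, DifferentiableAt ℝ g x) ∧
    ContinuousOn (deriv g) (Set.Icc 0 1 \ S)

/-- `g` has finitely many flat regions: the zero set of `g'` in `[0,1]` has finitely many
connected components. -/
def FiniteFlats (g : ℝ → ℝ) : Prop :=
  {C : Set ℝ | ∃ x ∈ {y ∈ Set.Icc (0:ℝ) 1 | deriv g y = 0},
      C = connectedComponentIn {y ∈ Set.Icc (0:ℝ) 1 | deriv g y = 0} x}.Finite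

/-- The class C¹_FF([0,1]). -/
def C1FF (g : ℝ → ℝ) : Prop := PiecewiseC1 g ∧ FiniteFlats g

/-- The set 𝒢 of admissible time warps: C¹_FF, non-decreasing on `[0,1]`,
with `g 0 = 0` and `g 1 = 1`. -/
def InG (g : ℝ → ℝ) : Prop :=
  C1FF g ∧ MonotoneOn g (Set.Icc 0 1) ∧ g 0 = 0 ∧ g 1 = 1

/-- Generalized inverse of `F : [a,b] → ℝ` : `F†(y) = inf {x ∈ [a,b] | F x > y}`,
with `inf ∅ = b` (implemented by adjoining `{b}`). -/
noncomputable def genInv (a b : ℝ) (F : ℝ → ℝ) (y : ℝ) : ℝ :=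
  sInf ({x ∈ Set.Icc a b | y < F x} ∪ {b})

namespace GC
section sec1
variable {f : ℝ → ℝ} {y y' : ℝ}

lemma gi_bdd (f : ℝ → ℝ) (y : ℝ) : BddBelow ({x ∈ Set.Icc (0:ℝ) 1 | y < f x} ∪ {1}) := by
  refine ⟨0, fun e he => ?_⟩
  rcases he with ⟨⟨h1, _⟩, _⟩ | h
  · exact h1
  · simp only [mem_singleton_iff] at h; simp [h]

lemma gi_ne (f : ℝ → ℝ) (y : ℝ) : ({x ∈ Set.Icc (0:ℝ) 1 | y < f x} ∪ {1}).Nonempty :=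
  ⟨1, Or.inr rfl⟩

lemma genInv_mem (f : ℝ → ℝ) (y : ℝ) : genInv 0 1 f y ∈ Set.Icc (0:ℝ) 1 := by
  constructor
  · exact le_csInf (gi_ne f y) fun e he => by
      rcases he with ⟨⟨h1, _⟩, _⟩ | h
      · exact h1
      · simp only [mem_singleton_iff] at h; simp [h]
  · exact csInf_le (gi_bdd f y) (Or.inr rfl)

lemma genInv_le {x : ℝ} (hx : x ∈ Set.Icc (0:ℝ) 1) (h : y < f x) : genInv 0 1 f y ≤ x :=
  csInf_le (gi_bdd f y) (Or.inl ⟨hx, h⟩)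

lemma apply_le_of_lt_genInv {x : ℝ} (hx : 0 ≤ x) (h : x < genInv 0 1 f y) : f x ≤ y := by
  by_contra hc
  push_neg at hc
  exact absurd (genInv_le ⟨hx, le_trans h.le (genInv_mem f y).2⟩ hc) (not_le.mpr h)

lemma lt_apply_of_genInv_lt (hf : MonotoneOn f (Set.Icc 0 1)) {t : ℝ}
    (ht : t ∈ Set.Icc (0:ℝ) 1) (h : genInv 0 1 f y < t) : y < f t := by
  obtain ⟨e, he, het⟩ := (csInf_lt_iff (gi_bdd f y) (gi_ne f y)).mp h
  rcases he with ⟨he1, he2⟩ | he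
  · exact lt_of_lt_of_le he2 (hf he1 ht het.le)
  · simp only [mem_singleton_iff] at he
    exact absurd (het.trans_le ht.2) (by simp [he])

lemma genInv_mono (f : ℝ → ℝ) (h : y ≤ y') : genInv 0 1 f y ≤ genInv 0 1 f y' := by
  refine csInf_le_csInf (gi_bdd f y) (gi_ne f y') ?_
  rintro e (⟨h1, h2⟩ | h1)
  · exact Or.inl ⟨h1, lt_of_le_of_lt h h2⟩
  · exact Or.inr h1

lemma genInv_apply_self (hf : StrictMonoOn f (Set.Icc 0 1)) {t : ℝ}
    (ht : t ∈ Set.Icc (0:ℝ) 1) : genInv 0 1 f (f t) = t := by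
  refine le_antisymm ?_ ?_
  · refine le_of_forall_pos_le_add fun ε hε => ?_
    rcases le_or_gt (t + ε) 1 with h1 | h1
    · exact csInf_le (gi_bdd f _) (Or.inl ⟨⟨by linarith [ht.1], h1⟩,
        hf ht ⟨by linarith [ht.1], h1⟩ (by linarith)⟩)
    · exact le_trans (csInf_le (gi_bdd f _) (Or.inr rfl)) h1.le
  · refine le_csInf (gi_ne f _) ?_
    rintro e (⟨h1, h2⟩ | h1)
    · by_contra hc
      push_neg at hc
      exact absurd h2 (not_lt.mpr ((hf.monotoneOn) h1 ht hc.le))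
    · simp only [mem_singleton_iff] at h1; rw [h1]; exact ht.2

/-- expansion property: `f` grows at least linearly -/
lemma genInv_lipschitz (hexp : ∀ t ∈ Set.Icc (0:ℝ) 1, ∀ t' ∈ Set.Icc (0:ℝ) 1,
      t ≤ t' → t' - t ≤ f t' - f t) {v v' : ℝ} (h : v ≤ v') :
    genInv 0 1 f v' ≤ genInv 0 1 f v + (v' - v) := by
  set t := genInv 0 1 f v with htdef
  have htm : t ∈ Set.Icc (0:ℝ) 1 := genInv_mem f v
  refine le_of_forall_pos_le_add fun ε hε => ?_
  rcases le_or_gt 1 (t + (v' - v) + ε) with h1 | h1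
  · exact le_trans (genInv_mem f v').2 (by linarith)
  · -- t'' := t + (v'-v) + ε works
    have hmono : MonotoneOn f (Set.Icc 0 1) := by
      intro a ha b hb hab
      have := hexp a ha b hb hab
      linarith
    have h2 : t + ε/2 ∈ Set.Icc (0:ℝ) 1 := ⟨by linarith [htm.1], by linarith [sub_nonneg.mpr h]⟩
    have h3 : v < f (t + ε/2) := lt_apply_of_genInv_lt hmono h2 (by linarith)
    have h4 : t + (v' - v) + ε ∈ Set.Icc (0:ℝ) 1 := ⟨by linarith [htm.1, sub_nonneg.mpr h], h1.le⟩
    have h5 := hexp _ h2 _ h4 (by linarith [sub_nonneg.mpr h])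
    refine csInf_le (gi_bdd f _) (Or.inl ⟨h4, by linarith⟩)

lemma genInv_le_self (hge : ∀ t ∈ Set.Icc (0:ℝ) 1, t ≤ f t) {v : ℝ} (hv : 0 ≤ v) :
    genInv 0 1 f v ≤ v := by
  rcases le_or_gt 1 v with h1 | h1
  · exact le_trans (genInv_mem f v).2 h1
  · refine le_of_forall_pos_le_add fun ε hε => ?_
    rcases le_or_gt (v + ε) 1 with h2 | h2
    · refine csInf_le (gi_bdd f _) (Or.inl ⟨⟨by linarith, h2⟩, ?_⟩)
      exact lt_of_lt_of_le (by linarith) (hge _ ⟨by linarith, h2⟩)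
    · exact le_trans (genInv_mem f v).2 (by linarith)

lemma apply_genInv_eq (hFc : ContinuousOn f (Set.Icc 0 1)) (hFm : MonotoneOn f (Set.Icc 0 1))
    (hF0 : f 0 = 0) (hF1 : f 1 = 1) (hy : y ∈ Set.Icc (0:ℝ) 1) :
    f (genInv 0 1 f y) = y := by
  set z := genInv 0 1 f y with hzdef
  have hzm : z ∈ Set.Icc (0:ℝ) 1 := genInv_mem f y
  have hle : f z ≤ y := by
    rcases eq_or_lt_of_le hzm.1 with h0 | h0
    · rw [← h0, hF0]; exact hy.1
    · by_contra hc
      push_neg at hc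
      have hcw : ContinuousWithinAt f (Set.Icc 0 1) z := hFc z hzm
      rw [Metric.continuousWithinAt_iff] at hcw
      obtain ⟨δ, hδ, hball⟩ := hcw (f z - y) (by linarith)
      set w := max 0 (z - min δ z / 2) with hwdef
      have hw0 : 0 ≤ w := le_max_left _ _
      have hwz : w < z := by
        have : 0 < min δ z := lt_min hδ h0
        apply max_lt h0; linarith
      have hwm : w ∈ Set.Icc (0:ℝ) 1 := ⟨hw0, hwz.le.trans hzm.2⟩
      have hdist : dist w z < δ := by
        rw [Real.dist_eq, abs_lt]
        constructor
        · have : z - min δ z / 2 ≤ w := le_max_right _ _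
          have : min δ z ≤ δ := min_le_left _ _
          linarith
        · linarith
      have := hball hwm hdist
      rw [Real.dist_eq, abs_lt] at this
      have hfw : y < f w := by linarith
      exact absurd (genInv_le hwm hfw) (not_le.mpr hwz)
  have hge : y ≤ f z := by
    rcases eq_or_lt_of_le hzm.2 with h1 | h1
    · rw [h1, hF1]; exact hy.2
    · by_contra hc
      push_neg at hc
      have hcw : ContinuousWithinAt f (Set.Icc 0 1) z := hFc z hzm
      rw [Metric.continuousWithinAt_iff] at hcw
      obtain ⟨δ, hδ, hball⟩ := hcw (y - f z) (by linarith)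
      have hθ : z < min ((z+1)/2) (z + δ/2) := lt_min (by linarith) (by linarith)
      obtain ⟨e, he, hlt⟩ := (csInf_lt_iff (gi_bdd f y) (gi_ne f y)).mp hθ
      have hez : z ≤ e := csInf_le (gi_bdd f y) he
      have he1 : e ≠ 1 := by
        intro h; rw [h] at hlt
        have : min ((z+1)/2) (z + δ/2) ≤ (z+1)/2 := min_le_left _ _
        linarith
      rcases he with ⟨hem, hey⟩ | hes
      · have hdist : dist e z < δ := by
          rw [Real.dist_eq, abs_lt]
          have : min ((z+1)/2) (z + δ/2) ≤ z + δ/2 := min_le_right _ _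
          constructor <;> linarith
        have := hball hem hdist
        rw [Real.dist_eq, abs_lt] at this
        linarith
      · exact absurd hes he1
  linarith

end sec1

noncomputable def wA (F G : ℝ → ℝ) : ℝ → ℝ := fun t => genInv 0 1 F (G t)
noncomputable def wR (F G : ℝ → ℝ) : ℝ → ℝ := fun t => t + wA F G t
noncomputable def wH1 (F G : ℝ → ℝ) : ℝ → ℝ := fun u => genInv 0 1 (wR F G) (2 * u)
noncomputable def wH2 (F G : ℝ → ℝ) : ℝ → ℝ := fun u => 2 * u - wH1 F G u

variable {F G : ℝ → ℝ}

lemma mapsIcc (hG : InG G) {t : ℝ} (ht : t ∈ Set.Icc (0:ℝ) 1) : G t ∈ Set.Icc (0:ℝ) 1 := by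
  obtain ⟨_, hm, h0, h1⟩ := hG
  constructor
  · rw [← h0]; exact hm (Set.left_mem_Icc.mpr zero_le_one) ht ht.1
  · rw [← h1]; exact hm ht (Set.right_mem_Icc.mpr zero_le_one) ht.2

lemma wA_mem (F G : ℝ → ℝ) (t : ℝ) : wA F G t ∈ Set.Icc (0:ℝ) 1 := genInv_mem F (G t)

lemma wA_mono (hG : InG G) : MonotoneOn (wA F G) (Set.Icc 0 1) :=
  fun _ ha _ hb hab => genInv_mono F (hG.2.1 ha hb hab)

lemma wR_exp (hG : InG G) : ∀ t ∈ Set.Icc (0:ℝ) 1, ∀ t' ∈ Set.Icc (0:ℝ) 1,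
    t ≤ t' → t' - t ≤ wR F G t' - wR F G t := by
  intro t ht t' ht' htt'
  have := wA_mono (F := F) hG ht ht' htt'
  simp only [wR]; linarith

lemma wR_strictMono (hG : InG G) : StrictMonoOn (wR F G) (Set.Icc 0 1) := by
  intro a ha b hb hab
  have := wR_exp (F := F) hG a ha b hb hab.le
  linarith

lemma wR_mono (hG : InG G) : MonotoneOn (wR F G) (Set.Icc 0 1) :=
  (wR_strictMono hG).monotoneOn

lemma genInv_one_eq (hFm : MonotoneOn F (Set.Icc 0 1)) (hF1 : F 1 = 1) :
    genInv 0 1 F 1 = 1 := by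
  have : {x ∈ Set.Icc (0:ℝ) 1 | 1 < F x} = ∅ := by
    ext x
    simp only [Set.mem_setOf_eq, Set.mem_empty_iff_false, iff_false, not_and]
    intro hx
    have : F x ≤ F 1 := hFm hx (Set.right_mem_Icc.mpr zero_le_one) hx.2
    rw [hF1] at this; exact not_lt.mpr this
  rw [genInv, this, Set.empty_union, csInf_singleton]

lemma wA_one (hF : InG F) (hG : InG G) : wA F G 1 = 1 := by
  rw [wA, hG.2.2.2]; exact genInv_one_eq hF.2.1 hF.2.2.2

lemma wR_le_two (hF : InG F) (hG : InG G) {t : ℝ} (ht : t ∈ Set.Icc (0:ℝ) 1) :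
    wR F G t ≤ 2 := by
  have h := (wA_mem F G t).2
  simp only [wR]; linarith [ht.2]

lemma wR_one (hF : InG F) (hG : InG G) : wR F G 1 = 2 := by
  simp only [wR, wA_one hF hG]; norm_num

lemma wR_ge_id (t : ℝ) : t ≤ wR F G t := by
  have := (wA_mem F G t).1
  simp only [wR]; linarith

lemma wH1_mem (F G : ℝ → ℝ) (u : ℝ) : wH1 F G u ∈ Set.Icc (0:ℝ) 1 := genInv_mem _ _

lemma wH1_mono (F G : ℝ → ℝ) : Monotone (wH1 F G) :=
  fun a b hab => genInv_mono (wR F G) (by linarith)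

lemma wH1_lip (hG : InG G) {u u' : ℝ} (h : u ≤ u') :
    wH1 F G u' ≤ wH1 F G u + 2 * (u' - u) := by
  have := genInv_lipschitz (f := wR F G) (wR_exp hG) (v := 2*u) (v' := 2*u') (by linarith)
  simp only [wH1]; linarith

lemma wH1_zero (hG : InG G) : wH1 F G 0 = 0 := by
  have h1 : (0:ℝ) ≤ wH1 F G 0 := (wH1_mem F G 0).1
  have h2 : wH1 F G 0 ≤ 0 := by
    simp only [wH1, mul_zero]
    exact genInv_le_self (fun t _ => wR_ge_id t) le_rfl
  linarith

lemma wH1_one (hF : InG F) (hG : InG G) : wH1 F G 1 = 1 := by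
  simp only [wH1, mul_one]
  have : {x ∈ Set.Icc (0:ℝ) 1 | 2 < wR F G x} = ∅ := by
    ext x
    simp only [Set.mem_setOf_eq, Set.mem_empty_iff_false, iff_false, not_and]
    exact fun hx => not_lt.mpr (wR_le_two hF hG hx)
  rw [genInv, this, Set.empty_union, csInf_singleton]

lemma wH2_mono (hG : InG G) : MonotoneOn (wH2 F G) (Set.Icc 0 1) := by
  intro a _ b _ hab
  have := wH1_lip (F := F) hG hab
  simp only [wH2]; linarith

lemma wH2_zero (hG : InG G) : wH2 F G 0 = 0 := by simp [wH2, wH1_zero hG]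

lemma wH2_one (hF : InG F) (hG : InG G) : wH2 F G 1 = 1 := by
  simp only [wH2, wH1_one hF hG]; norm_num

lemma wH2_mem (hF : InG F) (hG : InG G) {u : ℝ} (hu : u ∈ Set.Icc (0:ℝ) 1) :
    wH2 F G u ∈ Set.Icc (0:ℝ) 1 := by
  constructor
  · rw [← wH2_zero (F := F) hG]
    exact wH2_mono hG (Set.left_mem_Icc.mpr zero_le_one) hu hu.1
  · rw [← wH2_one hF hG]
    exact wH2_mono hG hu (Set.right_mem_Icc.mpr zero_le_one) hu.2

/-- the key surjectivity: the curve passes through `(t, F†(G t))` at `u = wR t / 2`. -/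
lemma wH1_graph (hG : InG G) {t : ℝ} (ht : t ∈ Set.Icc (0:ℝ) 1) :
    wH1 F G (wR F G t / 2) = t ∧ wH2 F G (wR F G t / 2) = wA F G t := by
  have h2 : 2 * (wR F G t / 2) = wR F G t := by ring
  have h1 : wH1 F G (wR F G t / 2) = t := by
    simp only [wH1, h2]
    exact genInv_apply_self (wR_strictMono hG) ht
  refine ⟨h1, ?_⟩
  simp only [wH2, h1, h2]
  simp only [wR]; ring

/-- L10: no overshoot at jumps: `wR (wH1 u) ≥ 2u`. -/
lemma wR_genInv_ge (hF : InG F) (hG : InG G) {v : ℝ} (hv : v ≤ 2) :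
    v ≤ wR F G (genInv 0 1 (wR F G) v) := by
  set t := genInv 0 1 (wR F G) v with htdef
  have htm : t ∈ Set.Icc (0:ℝ) 1 := genInv_mem _ v
  rcases eq_or_lt_of_le htm.2 with h1 | h1
  · rw [h1, wR_one hF hG]; exact hv
  · by_contra hc
    push_neg at hc
    set δ := v - wR F G t with hδdef
    have hδ : 0 < δ := by simp only [hδdef]; linarith
    -- uniform right bound on wA near t
    have hbound : ∃ δ₂ > 0, ∀ t'' ∈ Set.Icc (0:ℝ) 1, |t'' - t| < δ₂ →
        wA F G t'' ≤ wA F G t + δ/4 := by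
      have hlt : sInf ({x ∈ Set.Icc (0:ℝ) 1 | G t < F x} ∪ {1}) < wA F G t + δ/4 := by
        have : wA F G t = sInf ({x ∈ Set.Icc (0:ℝ) 1 | G t < F x} ∪ {1}) := rfl
        linarith
      obtain ⟨xh, hxh, hxhlt⟩ := (csInf_lt_iff (gi_bdd F (G t)) (gi_ne F (G t))).mp hlt
      rcases hxh with ⟨hxhm, hxhgt⟩ | hxh1
      · -- xh ∈ [0,1], F xh > G t
        have hGc : ContinuousWithinAt G (Set.Icc 0 1) t := hG.1.1.1 t htm
        rw [Metric.continuousWithinAt_iff] at hGc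
        obtain ⟨δ₂, hδ₂, hball⟩ := hGc (F xh - G t) (by linarith)
        refine ⟨δ₂, hδ₂, fun t'' ht'' hd => ?_⟩
        have := hball ht'' (by rwa [Real.dist_eq])
        rw [Real.dist_eq, abs_lt] at this
        have hGt'' : G t'' < F xh := by linarith
        exact le_trans (genInv_le hxhm hGt'') hxhlt.le
      · simp only [Set.mem_singleton_iff] at hxh1
        refine ⟨1, zero_lt_one, fun t'' ht'' _ => ?_⟩
        have := (wA_mem F G t'').2
        rw [hxh1] at hxhlt
        linarith
    obtain ⟨δ₂, hδ₂, hbd⟩ := hbound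
    set t'' := min 1 (min (t + δ₂/2) (t + δ/4)) with ht''def
    have htt'' : t < t'' := by
      apply lt_min h1 (lt_min (by linarith) (by linarith))
    have ht''m : t'' ∈ Set.Icc (0:ℝ) 1 := ⟨le_trans htm.1 htt''.le, min_le_left _ _⟩
    have ht''d : |t'' - t| < δ₂ := by
      rw [abs_lt]
      have h2 : t'' ≤ t + δ₂/2 := le_trans (min_le_right _ _) (min_le_left _ _)
      constructor <;> [linarith; linarith]
    have ht''δ : t'' ≤ t + δ/4 := le_trans (min_le_right _ _) (min_le_right _ _)
    have h3 : wA F G t'' ≤ wA F G t + δ/4 := hbd t'' ht''m ht''d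
    have h4 : wR F G t'' ≤ wR F G t + δ/2 := by simp only [wR]; linarith
    have h5 : v < wR F G t'' := lt_apply_of_genInv_lt (wR_mono hG) ht''m htt''
    simp only [hδdef] at h4 h5
    linarith

lemma wH2_le_wA (hF : InG F) (hG : InG G) {u : ℝ} (hu : u ∈ Set.Icc (0:ℝ) 1) :
    wH2 F G u ≤ wA F G (wH1 F G u) := by
  have h := wR_genInv_ge hF hG (v := 2*u) (by linarith [hu.2])
  have h2 : wH1 F G u = genInv 0 1 (wR F G) (2*u) := rfl
  show 2*u - wH1 F G u ≤ wA F G (wH1 F G u)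
  rw [h2]
  simp only [wR] at h
  linarith

/-- the matching property -/
lemma wMatch (hF : InG F) (hG : InG G) {u : ℝ} (hu : u ∈ Set.Icc (0:ℝ) 1) :
    G (wH1 F G u) = F (wH2 F G u) := by
  set t := wH1 F G u with htdef
  set x := wH2 F G u with hxdef
  have htm : t ∈ Set.Icc (0:ℝ) 1 := wH1_mem F G u
  have hxm : x ∈ Set.Icc (0:ℝ) 1 := wH2_mem hF hG hu
  have hcm : G t ∈ Set.Icc (0:ℝ) 1 := mapsIcc hG htm
  have hFmono := hF.2.1
  have hupper : F x ≤ G t := by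
    have h1 : x ≤ wA F G t := wH2_le_wA hF hG hu
    have h2 : F x ≤ F (wA F G t) := hFmono hxm (wA_mem F G t) h1
    simp only [wA] at h2
    rwa [apply_genInv_eq hF.1.1.1 hFmono hF.2.2.1 hF.2.2.2 hcm] at h2
  have hlower : G t ≤ F x := by
    rcases eq_or_lt_of_le htm.1 with h0 | h0
    · rw [← h0, hG.2.2.1]
      rw [← hF.2.2.1]
      exact hFmono (Set.left_mem_Icc.mpr zero_le_one) hxm hxm.1
    · by_contra hcon
      push_neg at hcon
      set ε := (G t - F x)/2 with hεdef
      have hε : 0 < ε := by simp only [hεdef]; linarith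
      have hGc : ContinuousWithinAt G (Set.Icc 0 1) t := hG.1.1.1 t htm
      rw [Metric.continuousWithinAt_iff] at hGc
      obtain ⟨δ₂, hδ₂, hGball⟩ := hGc ε hε
      have hFc : ContinuousWithinAt F (Set.Icc 0 1) x := hF.1.1.1 x hxm
      rw [Metric.continuousWithinAt_iff] at hFc
      obtain ⟨δ₁, hδ₁, hFball⟩ := hFc ε hε
      set t' := max 0 (t - min δ₁ (min δ₂ t) / 2) with ht'def
      have hmin : 0 < min δ₁ (min δ₂ t) := lt_min hδ₁ (lt_min hδ₂ h0)
      have ht'lt : t' < t := max_lt h0 (by linarith)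
      have ht'0 : 0 ≤ t' := le_max_left _ _
      have ht'm : t' ∈ Set.Icc (0:ℝ) 1 := ⟨ht'0, ht'lt.le.trans htm.2⟩
      have ht'close : t - t' ≤ min δ₁ (min δ₂ t) / 2 := by
        have := le_max_right 0 (t - min δ₁ (min δ₂ t) / 2)
        simp only [ht'def]; linarith
      -- (P1): wR t' ≤ 2u
      have hP1 : wR F G t' ≤ 2 * u := by
        have : t' < genInv 0 1 (wR F G) (2*u) := ht'lt
        exact apply_le_of_lt_genInv ht'0 this
      set w := wA F G t' with hwdef
      have hwm : w ∈ Set.Icc (0:ℝ) 1 := wA_mem F G t'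
      have hFw : F w = G t' := by
        simp only [hwdef, wA]
        exact apply_genInv_eq hF.1.1.1 hFmono hF.2.2.1 hF.2.2.2 (mapsIcc hG ht'm)
      have hGt' : G t - ε < G t' := by
        have := hGball ht'm (by
          rw [Real.dist_eq, abs_lt]
          have h5 : min δ₁ (min δ₂ t) ≤ δ₂ := le_trans (min_le_right _ _) (min_le_left _ _)
          constructor <;> [linarith; linarith])
        rw [Real.dist_eq, abs_lt] at this
        linarith
      have hwx : w ≤ x + (t - t') := by
        simp only [wR] at hP1
        have : x = 2*u - t := rfl
        simp only [hwdef]; linarith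
      rcases le_or_gt w x with hcase | hcase
      · -- G t' = F w ≤ F x, but G t' > G t - ε > F x
        have : F w ≤ F x := hFmono hwm hxm hcase
        rw [hFw] at this
        simp only [hεdef] at hGt'
        linarith
      · have hdist : dist w x < δ₁ := by
          rw [Real.dist_eq, abs_lt]
          have h5 : min δ₁ (min δ₂ t) ≤ δ₁ := min_le_left _ _
          constructor <;> [linarith; linarith]
        have := hFball hwm hdist
        rw [Real.dist_eq, abs_lt] at this
        rw [hFw] at this
        simp only [hεdef] at hGt' this
        linarith
  linarith



/-- Finitely many connected components from a finite preconnected cover. -/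
lemma components_finite {Z : Set ℝ} (Ps : Set (Set ℝ)) (hfin : Ps.Finite)
    (hconn : ∀ P ∈ Ps, IsPreconnected P) (hsub : ∀ P ∈ Ps, P ⊆ Z) (hcov : Z ⊆ ⋃₀ Ps) :
    {C : Set ℝ | ∃ x ∈ Z, C = connectedComponentIn Z x}.Finite := by
  have himg : ∀ P ∈ Ps, ((fun x => connectedComponentIn Z x) '' P).Finite := by
    intro P hP
    apply Set.Subsingleton.finite
    rintro a ⟨xa, hxa, rfl⟩ b ⟨xb, hxb, rfl⟩
    have h1 : P ⊆ connectedComponentIn Z xa :=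
      (hconn P hP).subset_connectedComponentIn hxa (hsub P hP)
    simpa using connectedComponentIn_eq (h1 hxb)
  refine Set.Finite.subset (Set.Finite.biUnion hfin himg) ?_
  rintro C ⟨x, hx, rfl⟩
  obtain ⟨P, hP, hxP⟩ := hcov hx
  exact Set.mem_biUnion hP ⟨x, hxP, rfl⟩

/-- Removing finitely many ordConnected sets from an ordConnected set leaves a finite
union of ordConnected sets. -/
lemma diff_finite_ordConnected {I : Set ℝ} (hI : I.OrdConnected) (Js : Set (Set ℝ))
    (hfin : Js.Finite) :
    (∀ J ∈ Js, J.OrdConnected) →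
    ∃ Ps : Set (Set ℝ), Ps.Finite ∧ (∀ P ∈ Ps, P.OrdConnected) ∧ I \ ⋃₀ Js = ⋃₀ Ps := by
  refine Set.Finite.induction_on Js hfin ?_ ?_
  · exact fun _ => ⟨{I}, Set.finite_singleton I, by simpa using hI, by simp⟩
  · rintro J Js' hJJs' hfin' ih hord
    obtain ⟨Ps', hfin'', hord', heq⟩ := ih (fun K hK => hord K (Set.mem_insert_of_mem J hK))
    have hJo : J.OrdConnected := hord J (Set.mem_insert J Js')
    have key : ∀ x : ℝ, x ∉ J → (∀ j ∈ J, x < j) ∨ (∀ j ∈ J, j < x) := by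
      intro x hx
      by_cases h : ∀ j ∈ J, x < j
      · exact Or.inl h
      · push_neg at h
        obtain ⟨j₁, hj₁, hj₁x⟩ := h
        refine Or.inr fun j₂ hj₂ => ?_
        rcases lt_or_ge j₂ x with h' | h'
        · exact h'
        · exact absurd (hJo.out hj₁ hj₂ ⟨hj₁x, h'⟩) hx
    set L : Set ℝ → Set ℝ := fun P => {x ∈ P | x ∉ J ∧ ∀ j ∈ J, x < j} with hL
    set R : Set ℝ → Set ℝ := fun P => {x ∈ P | x ∉ J ∧ ∀ j ∈ J, j < x} with hR
    refine ⟨L '' Ps' ∪ R '' Ps', (hfin''.image L).union (hfin''.image R), ?_, ?_⟩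
    · rintro P (⟨Q, hQ, rfl⟩ | ⟨Q, hQ, rfl⟩)
      · constructor
        intro x hx y hy z hz
        refine ⟨(hord' Q hQ).out hx.1 hy.1 hz, fun hzJ => ?_, fun j hj => ?_⟩
        · exact absurd hz.2 (not_le.mpr (hy.2.2 z hzJ))
        · exact lt_of_le_of_lt hz.2 (hy.2.2 j hj)
      · constructor
        intro x hx y hy z hz
        refine ⟨(hord' Q hQ).out hx.1 hy.1 hz, fun hzJ => ?_, fun j hj => ?_⟩
        · exact absurd hz.1 (not_le.mpr (hx.2.2 z hzJ))
        · exact lt_of_lt_of_le (hx.2.2 j hj) hz.1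
    · ext x
      simp only [Set.sUnion_insert, Set.mem_diff, Set.mem_union, Set.mem_sUnion]
      constructor
      · rintro ⟨hxI, hxn⟩
        push_neg at hxn
        have hx1 : x ∈ I \ ⋃₀ Js' := ⟨hxI, by
          intro hc; obtain ⟨K, hK, hxK⟩ := hc; exact (hxn.2 K hK) hxK⟩
        rw [heq] at hx1
        obtain ⟨Q, hQ, hxQ⟩ := hx1
        rcases key x hxn.1 with hk | hk
        · exact ⟨L Q, Or.inl ⟨Q, hQ, rfl⟩, ⟨hxQ, hxn.1, hk⟩⟩
        · exact ⟨R Q, Or.inr ⟨Q, hQ, rfl⟩, ⟨hxQ, hxn.1, hk⟩⟩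
      · rintro ⟨P, hP, hxP⟩
        have hxQd : x ∈ I \ ⋃₀ Js' ∧ x ∉ J := by
          rcases hP with ⟨Q, hQ, rfl⟩ | ⟨Q, hQ, rfl⟩
          · exact ⟨heq ▸ ⟨Q, hQ, hxP.1⟩, hxP.2.1⟩
          · exact ⟨heq ▸ ⟨Q, hQ, hxP.1⟩, hxP.2.1⟩
        exact ⟨hxQd.1.1, by
          rintro (hc | hc)
          · exact hxQd.2 hc
          · exact hxQd.1.2 ((Set.mem_sUnion).mpr hc)⟩

/-- f continuous on [a,b], deriv zero off finite set ⟹ constant. -/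
lemma const_of_deriv_zero (f : ℝ → ℝ) :
    ∀ (n : ℕ) (E : Finset ℝ), E.card = n → ∀ (a b : ℝ), a ≤ b →
    ContinuousOn f (Set.Icc a b) →
    (∀ x ∈ Set.Ioo a b \ (E : Set ℝ), DifferentiableAt ℝ f x ∧ deriv f x = 0) →
    f a = f b := by
  intro n
  induction n using Nat.strong_induction_on with
  | _ n ih =>
    intro E hcard a b hab hc hd
    by_cases hex : ∃ s ∈ E, s ∈ Set.Ioo a b
    · obtain ⟨s, hsE, hs⟩ := hex
      have hcard' : (E.erase s).card < n := by
        rw [← hcard]; exact Finset.card_erase_lt_of_mem hsE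
      have h1 : f a = f s := by
        refine ih _ hcard' (E.erase s) rfl a s hs.1.le
          (hc.mono (Set.Icc_subset_Icc le_rfl hs.2.le)) ?_
        rintro x ⟨hx1, hx2⟩
        refine hd x ⟨⟨hx1.1, hx1.2.trans hs.2⟩, fun hxE => hx2 ?_⟩
        exact Finset.mem_coe.mpr (Finset.mem_erase.mpr ⟨ne_of_lt hx1.2, hxE⟩)
      have h2 : f s = f b := by
        refine ih _ hcard' (E.erase s) rfl s b hs.2.le
          (hc.mono (Set.Icc_subset_Icc hs.1.le le_rfl)) ?_
        rintro x ⟨hx1, hx2⟩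
        refine hd x ⟨⟨hs.1.trans hx1.1, hx1.2⟩, fun hxE => hx2 ?_⟩
        exact Finset.mem_coe.mpr (Finset.mem_erase.mpr ⟨(ne_of_gt hx1.1), hxE⟩)
      exact h1.trans h2
    · push_neg at hex
      have hdiff : ∀ x ∈ Set.Ioo a b, DifferentiableAt ℝ f x ∧ deriv f x = 0 := by
        intro x hx
        exact hd x ⟨hx, fun hxE => (hex x hxE hx).elim⟩
      have hint : interior (Set.Icc a b) = Set.Ioo a b := interior_Icc
      have hmono : MonotoneOn f (Set.Icc a b) := by
        refine monotoneOn_of_deriv_nonneg (convex_Icc a b) hc ?_ ?_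
        · rw [hint]; exact fun x hx => ((hdiff x hx).1).differentiableWithinAt
        · rw [hint]; exact fun x hx => le_of_eq ((hdiff x hx).2).symm
      have hanti : AntitoneOn f (Set.Icc a b) := by
        refine antitoneOn_of_deriv_nonpos (convex_Icc a b) hc ?_ ?_
        · rw [hint]; exact fun x hx => ((hdiff x hx).1).differentiableWithinAt
        · rw [hint]; exact fun x hx => le_of_eq ((hdiff x hx).2)
      exact le_antisymm (hmono ⟨le_rfl, hab⟩ ⟨hab, le_rfl⟩ hab)
        (hanti ⟨le_rfl, hab⟩ ⟨hab, le_rfl⟩ hab)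

/-- derivative of a function monotone on [0,1] is nonneg at interior points. -/
lemma deriv_nonneg_of_monotoneOn {g : ℝ → ℝ} (hm : MonotoneOn g (Set.Icc 0 1)) {x : ℝ}
    (hx : x ∈ Set.Ioo (0:ℝ) 1) (hd : DifferentiableAt ℝ g x) : 0 ≤ deriv g x := by
  have h1 : HasDerivAt g (deriv g x) x := hd.hasDerivAt
  rw [hasDerivAt_iff_tendsto_slope] at h1
  have h2 : Filter.Tendsto (slope g x) (nhdsWithin x (Set.Ioi x)) (nhds (deriv g x)) :=
    h1.mono_left (nhdsWithin_mono x fun y hy => ne_of_gt hy)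
  refine ge_of_tendsto h2 ?_
  filter_upwards [Ioo_mem_nhdsGT_of_mem ⟨le_rfl, hx.2⟩] with y hy
  rw [slope_def_field]
  apply div_nonneg _ (by linarith [hy.1] : (0:ℝ) ≤ y - x)
  have := hm ⟨hx.1.le, hx.2.le⟩ ⟨hx.1.le.trans hy.1.le, hy.2.le⟩ hy.1.le
  linarith


variable {F G : ℝ → ℝ}

/-- bad values of `F` for the generalized inverse -/
def YBad (F : ℝ → ℝ) (SF : Finset ℝ) : Set ℝ :=
  F '' ((SF : Set ℝ) ∩ Set.Icc 0 1) ∪ F '' {x ∈ Set.Icc (0:ℝ) 1 | deriv F x = 0} ∪ {0, 1}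

lemma YBad_finite (hF : InG F) (SF : Finset ℝ)
    (hdiff : ∀ x ∈ Set.Icc (0:ℝ) 1 \ SF, DifferentiableAt ℝ F x) :
    (YBad F SF).Finite := by
  refine (Set.Finite.union ?_ ?_).union ((Set.finite_singleton (1:ℝ)).insert 0)
  · exact (SF.finite_toSet.inter_of_left _).image F
  · -- image of the flat set is finite: F is constant on each component
    set ZF := {x ∈ Set.Icc (0:ℝ) 1 | deriv F x = 0} with hZF
    have hcomp := hF.1.2
    have hsub : F '' ZF ⊆ ⋃ C ∈ {C : Set ℝ | ∃ x ∈ ZF, C = connectedComponentIn ZF x},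
        F '' C := by
      rintro y ⟨x, hx, rfl⟩
      exact Set.mem_biUnion ⟨x, hx, rfl⟩
        ⟨x, mem_connectedComponentIn hx, rfl⟩
    refine Set.Finite.subset (Set.Finite.biUnion hcomp ?_) hsub
    rintro C ⟨x₀, hx₀, rfl⟩
    apply Set.Subsingleton.finite
    rintro a ⟨xa, hxa, rfl⟩ b ⟨xb, hxb, rfl⟩
    have hCZ : connectedComponentIn ZF x₀ ⊆ ZF := connectedComponentIn_subset ZF x₀
    have hord : (connectedComponentIn ZF x₀).OrdConnected :=
      (isPreconnected_connectedComponentIn).ordConnected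
    -- wlog xa ≤ xb
    have key : ∀ xa xb, xa ∈ connectedComponentIn ZF x₀ → xb ∈ connectedComponentIn ZF x₀ →
        xa ≤ xb → F xa = F xb := by
      intro xa xb hxa hxb hab
      refine const_of_deriv_zero F SF.card SF rfl xa xb hab
        (hF.1.1.1.mono ?_) ?_
      · intro z hz
        exact hCZ (hord.out hxa hxb hz) |>.1
      · rintro z ⟨hz1, hz2⟩
        have hzC : z ∈ connectedComponentIn ZF x₀ := hord.out hxa hxb ⟨hz1.1.le, hz1.2.le⟩
        have hzZ := hCZ hzC
        exact ⟨hdiff z ⟨hzZ.1, hz2⟩, hzZ.2⟩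
    rcases le_total xa xb with h | h
    · exact key xa xb hxa hxb h
    · exact (key xb xa hxb hxa h).symm

/-- L15: local C¹ regularity of the generalized inverse of `F` away from bad values. -/
lemma genInvF_locC1 (hF : InG F) (SF : Finset ℝ)
    (hdiff : ∀ x ∈ Set.Icc (0:ℝ) 1 \ SF, DifferentiableAt ℝ F x)
    (hdc : ContinuousOn (deriv F) (Set.Icc 0 1 \ SF))
    {y₀ : ℝ} (hy₀ : y₀ ∈ Set.Icc (0:ℝ) 1) (hy₀n : y₀ ∉ YBad F SF) :
    ∃ ε > 0, ∀ y, dist y y₀ < ε →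
      HasDerivAt (genInv 0 1 F) ((deriv F (genInv 0 1 F y))⁻¹) y ∧
      0 < deriv F (genInv 0 1 F y) ∧
      ContinuousAt (genInv 0 1 F) y ∧
      ContinuousAt (deriv F) (genInv 0 1 F y) := by
  have hFm := hF.2.1
  have hFc := hF.1.1.1
  have hy₀01 : y₀ ∈ Set.Ioo (0:ℝ) 1 := by
    rcases eq_or_lt_of_le hy₀.1 with h | h
    · exact absurd (Or.inr (by simp [← h])) hy₀n
    rcases eq_or_lt_of_le hy₀.2 with h' | h'
    · exact absurd (Or.inr (by simp [h'])) hy₀n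
    exact ⟨h, h'⟩
  set x₀ := genInv 0 1 F y₀ with hx₀def
  have hx₀m : x₀ ∈ Set.Icc (0:ℝ) 1 := genInv_mem F y₀
  have hFx₀ : F x₀ = y₀ := apply_genInv_eq hFc hFm hF.2.2.1 hF.2.2.2 hy₀
  have hx₀01 : x₀ ∈ Set.Ioo (0:ℝ) 1 := by
    rcases eq_or_lt_of_le hx₀m.1 with h | h
    · rw [← h, hF.2.2.1] at hFx₀; exact absurd hFx₀.symm (ne_of_gt hy₀01.1)
    rcases eq_or_lt_of_le hx₀m.2 with h' | h'
    · rw [h', hF.2.2.2] at hFx₀; exact absurd hFx₀.symm (ne_of_lt hy₀01.2)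
    exact ⟨h, h'⟩
  have hx₀S : x₀ ∉ (SF : Set ℝ) := fun hc =>
    hy₀n (Or.inl (Or.inl ⟨x₀, ⟨hc, hx₀m⟩, hFx₀⟩))
  have hx₀d : DifferentiableAt ℝ F x₀ := hdiff x₀ ⟨hx₀m, hx₀S⟩
  have hx₀dne : deriv F x₀ ≠ 0 := fun hc =>
    hy₀n (Or.inl (Or.inr ⟨x₀, ⟨hx₀m, hc⟩, hFx₀⟩))
  have hx₀dpos : 0 < deriv F x₀ :=
    lt_of_le_of_ne (deriv_nonneg_of_monotoneOn hFm hx₀01 hx₀d) (Ne.symm hx₀dne)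
  -- open set around x₀ avoiding SF and inside Ioo 0 1
  have hopen : IsOpen (Set.Ioo (0:ℝ) 1 \ (SF : Set ℝ)) :=
    isOpen_Ioo.sdiff (SF.finite_toSet.isClosed)
  obtain ⟨δ₁, hδ₁, hball₁⟩ := Metric.isOpen_iff.mp hopen x₀ ⟨hx₀01, hx₀S⟩
  -- continuity of deriv F at x₀, giving positivity nearby
  have hsubset : Set.Ioo (0:ℝ) 1 \ (SF : Set ℝ) ⊆ Set.Icc 0 1 \ (SF : Set ℝ) :=
    fun z hz => ⟨⟨hz.1.1.le, hz.1.2.le⟩, hz.2⟩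
  have hcontd : ContinuousAt (deriv F) x₀ := by
    refine hdc.continuousAt (Filter.mem_of_superset ?_ hsubset)
    exact hopen.mem_nhds ⟨hx₀01, hx₀S⟩
  have hevpos : ∀ᶠ x in nhds x₀, 0 < deriv F x := hcontd.eventually (lt_mem_nhds hx₀dpos)
  obtain ⟨δ₂, hδ₂, hball₂⟩ := Metric.eventually_nhds_iff.mp hevpos
  set δ := min δ₁ δ₂ with hδdef
  have hδpos : 0 < δ := lt_min hδ₁ hδ₂
  have hball : ∀ x, dist x x₀ < δ → (x ∈ Set.Ioo (0:ℝ) 1 ∧ x ∉ (SF : Set ℝ)) ∧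
      0 < deriv F x ∧ DifferentiableAt ℝ F x := by
    intro x hx
    have h1 := hball₁ (lt_of_lt_of_le hx (min_le_left _ _))
    have h2 := hball₂ (lt_of_lt_of_le hx (min_le_right _ _))
    exact ⟨h1, h2, hdiff x (hsubset h1)⟩
  set a := x₀ - δ/4 with hadef
  set b := x₀ + δ/4 with hbdef
  have hab : a < b := by simp only [hadef, hbdef]; linarith
  have hmem : ∀ x ∈ Set.Icc a b, dist x x₀ < δ := by
    intro x hx
    rw [Real.dist_eq, abs_lt]
    simp only [hadef, hbdef] at hx
    constructor <;> [linarith [hx.1]; linarith [hx.2]]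
  have hcont_ab : ContinuousOn F (Set.Icc a b) :=
    fun x hx => ((hball x (hmem x hx)).2.2).continuousAt.continuousWithinAt
  have hsm : StrictMonoOn F (Set.Icc a b) := by
    refine strictMonoOn_of_deriv_pos (convex_Icc a b) hcont_ab ?_
    intro x hx
    rw [interior_Icc] at hx
    exact (hball x (hmem x ⟨hx.1.le, hx.2.le⟩)).2.1
  have habm : ∀ x ∈ Set.Icc a b, x ∈ Set.Icc (0:ℝ) 1 := by
    intro x hx
    have := (hball x (hmem x hx)).1.1
    exact ⟨this.1.le, this.2.le⟩
  have ham : a ∈ Set.Icc a b := Set.left_mem_Icc.mpr hab.le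
  have hbm : b ∈ Set.Icc a b := Set.right_mem_Icc.mpr hab.le
  have hx₀ab : x₀ ∈ Set.Icc a b := ⟨by simp [hadef]; linarith, by simp [hbdef]; linarith⟩
  have hFa : F a < y₀ := by
    rw [← hFx₀]; exact hsm ham hx₀ab (by simp [hadef]; linarith)
  have hFb : y₀ < F b := by
    rw [← hFx₀]; exact hsm hx₀ab hbm (by simp [hbdef]; linarith)
  set ε := min (y₀ - F a) (F b - y₀) with hεdef
  have hε : 0 < ε := lt_min (by linarith) (by linarith)
  -- key inversion property
  have hkey : ∀ y, dist y y₀ < ε → genInv 0 1 F y ∈ Set.Ioo a b ∧ F (genInv 0 1 F y) = y := by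
    intro y hy
    rw [Real.dist_eq, abs_lt] at hy
    have hy1 : F a < y := by
      have : ε ≤ y₀ - F a := min_le_left _ _
      linarith
    have hy2 : y < F b := by
      have : ε ≤ F b - y₀ := min_le_right _ _
      linarith
    obtain ⟨x, hxab, hFx⟩ := intermediate_value_Icc hab.le hcont_ab ⟨hy1.le, hy2.le⟩
    have hxa : a < x := by
      rcases eq_or_lt_of_le hxab.1 with h | h
      · rw [← h] at hFx; exact absurd hFx (hy1.ne)
      · exact h
    have hxb : x < b := by
      rcases eq_or_lt_of_le hxab.2 with h | h
      · rw [h] at hFx; exact absurd hFx (hy2.ne')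
      · exact h
    have hgx : genInv 0 1 F y = x := by
      refine le_antisymm ?_ ?_
      · refine le_of_forall_pos_le_add fun η hη => ?_
        set x' := min b (x + η) with hx'def
        have hxx' : x < x' := lt_min hxb (by linarith)
        have hx'ab : x' ∈ Set.Icc a b := ⟨le_trans hxa.le hxx'.le, min_le_left _ _⟩
        have : y < F x' := by rw [← hFx]; exact hsm hxab hx'ab hxx'
        exact le_trans (genInv_le (habm x' hx'ab) this) (le_trans (min_le_right _ _) (by linarith))
      · refine le_csInf (gi_ne F y) ?_
        rintro e (⟨he1, he2⟩ | he1)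
        · by_contra hc
          push_neg at hc
          have : F e ≤ F x := hFm he1 (habm x hxab) hc.le
          rw [hFx] at this
          exact absurd he2 (not_lt.mpr this)
        · simp only [Set.mem_singleton_iff] at he1
          rw [he1]; exact (habm x hxab).2
    rw [hgx]
    exact ⟨⟨hxa, hxb⟩, hFx⟩
  -- continuity of genInv at points of the ball
  have hcontgi : ∀ y, dist y y₀ < ε → ContinuousAt (genInv 0 1 F) y := by
    intro y hy
    obtain ⟨hxy, hFxy⟩ := hkey y hy
    set xy := genInv 0 1 F y with hxydef
    rw [Metric.continuousAt_iff]
    intro ρ hρ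
    set a' := max a (xy - ρ/2) with ha'def
    set b' := min b (xy + ρ/2) with hb'def
    have ha'xy : a' < xy := max_lt hxy.1 (by linarith)
    have hxyb' : xy < b' := lt_min hxy.2 (by linarith)
    have ha'ab : a' ∈ Set.Icc a b := ⟨le_max_left _ _, le_trans ha'xy.le hxyb'.le |>.trans (min_le_left _ _)⟩
    have hb'ab : b' ∈ Set.Icc a b := ⟨le_trans (le_max_left _ _) (ha'xy.le.trans hxyb'.le), min_le_left _ _⟩
    have hxyab : xy ∈ Set.Icc a b := ⟨hxy.1.le, hxy.2.le⟩
    have hFa' : F a' < y := by rw [← hFxy]; exact hsm ha'ab hxyab ha'xy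
    have hFb' : y < F b' := by rw [← hFxy]; exact hsm hxyab hb'ab hxyb'
    refine ⟨min (y - F a') (F b' - y), lt_min (by linarith) (by linarith), ?_⟩
    intro y' hy'
    rw [Real.dist_eq, abs_lt] at hy'
    have h1 : F a' < y' := by
      have : min (y - F a') (F b' - y) ≤ y - F a' := min_le_left _ _
      linarith [hy'.1]
    have h2 : y' < F b' := by
      have : min (y - F a') (F b' - y) ≤ F b' - y := min_le_right _ _
      linarith [hy'.2]
    have hub : genInv 0 1 F y' ≤ b' := genInv_le (habm b' hb'ab) h2
    have hlb : a' ≤ genInv 0 1 F y' := by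
      by_contra hc
      push_neg at hc
      have := lt_apply_of_genInv_lt hFm (habm a' ha'ab) hc
      linarith
    rw [Real.dist_eq, abs_lt]
    have hρ1 : xy - ρ/2 ≤ a' := le_max_right _ _
    have hρ2 : b' ≤ xy + ρ/2 := min_le_right _ _
    constructor <;> [linarith; linarith]
  refine ⟨ε, hε, fun y hy => ?_⟩
  obtain ⟨hxy, hFxy⟩ := hkey y hy
  have hxyd : dist (genInv 0 1 F y) x₀ < δ := hmem _ ⟨hxy.1.le, hxy.2.le⟩
  have hb2 := hball _ hxyd
  have hder : HasDerivAt F (deriv F (genInv 0 1 F y)) (genInv 0 1 F y) :=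
    hb2.2.2.hasDerivAt
  have hevinv : ∀ᶠ y' in nhds y, F (genInv 0 1 F y') = y' := by
    have : Metric.ball y₀ ε ∈ nhds y := Metric.isOpen_ball.mem_nhds (by simpa [Metric.mem_ball] using hy)
    filter_upwards [this] with y' hy'
    exact (hkey y' (by simpa [Metric.mem_ball] using hy')).2
  refine ⟨HasDerivAt.of_local_left_inverse (hcontgi y hy) hder (ne_of_gt hb2.2.1) hevinv,
    hb2.2.1, hcontgi y hy, ?_⟩
  refine hdc.continuousAt (Filter.mem_of_superset ?_ hsubset)
  exact hopen.mem_nhds hb2.1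

noncomputable def rdF (F G : ℝ → ℝ) : ℝ → ℝ :=
  fun t => 1 + (deriv F (genInv 0 1 F (G t)))⁻¹ * deriv G t

def Tbad (F G : ℝ → ℝ) (SF SG : Finset ℝ) : Set ℝ :=
  (SG : Set ℝ) ∪ {0, 1} ∪
  (⋃ y ∈ YBad F SF, {sInf {t ∈ Set.Icc (0:ℝ) 1 | G t = y},
    sSup {t ∈ Set.Icc (0:ℝ) 1 | G t = y}})

lemma Tbad_finite (hF : InG F) (SF SG : Finset ℝ)
    (hdiffF : ∀ x ∈ Set.Icc (0:ℝ) 1 \ SF, DifferentiableAt ℝ F x) :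
    (Tbad F G SF SG).Finite := by
  refine (Set.Finite.union (SG.finite_toSet.union ((Set.finite_singleton (1:ℝ)).insert 0)) ?_)
  exact Set.Finite.biUnion (YBad_finite hF SF hdiffF)
    (fun y _ => (Set.finite_singleton _).insert _)

/-- L16: local C¹ regularity of `wR` away from `Tbad`. -/
lemma wR_locC1 (hF : InG F) (hG : InG G) (SF SG : Finset ℝ)
    (hdiffF : ∀ x ∈ Set.Icc (0:ℝ) 1 \ SF, DifferentiableAt ℝ F x)
    (hdcF : ContinuousOn (deriv F) (Set.Icc 0 1 \ SF))
    (hdiffG : ∀ x ∈ Set.Icc (0:ℝ) 1 \ SG, DifferentiableAt ℝ G x)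
    (hdcG : ContinuousOn (deriv G) (Set.Icc 0 1 \ SG))
    {t₀ : ℝ} (ht₀ : t₀ ∈ Set.Ioo (0:ℝ) 1) (ht₀n : t₀ ∉ Tbad F G SF SG) :
    ∃ ε > 0, ∀ t, dist t t₀ < ε →
      HasDerivAt (wR F G) (rdF F G t) t ∧ 1 ≤ rdF F G t ∧ ContinuousAt (rdF F G) t ∧
      (rdF F G t = 1 → deriv G t = 0) := by
  have ht₀m : t₀ ∈ Set.Icc (0:ℝ) 1 := ⟨ht₀.1.le, ht₀.2.le⟩
  have hSGn : t₀ ∉ (SG : Set ℝ) := fun hc => ht₀n (Or.inl (Or.inl hc))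
  by_cases hY : G t₀ ∈ YBad F SF
  · -- G is locally constant around t₀
    set E := {t ∈ Set.Icc (0:ℝ) 1 | G t = G t₀} with hEdef
    have htE : t₀ ∈ E := ⟨ht₀m, rfl⟩
    have hEbdd : BddBelow E := ⟨0, fun e he => he.1.1⟩
    have hEbdd' : BddAbove E := ⟨1, fun e he => he.1.2⟩
    set α := sInf E with hα
    set β := sSup E with hβ
    have hαt : α ≤ t₀ := csInf_le hEbdd htE
    have htβ : t₀ ≤ β := le_csSup hEbdd' htE
    have hne : t₀ ∉ ({sInf E, sSup E} : Set ℝ) := fun hc =>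
      ht₀n (Or.inr (Set.mem_biUnion hY hc))
    have hαlt : α < t₀ := lt_of_le_of_ne hαt fun hc => hne (Or.inl hc.symm)
    have hltβ : t₀ < β := lt_of_le_of_ne htβ fun hc => hne (Or.inr hc)
    have hconst : ∀ t ∈ Set.Ioo α β, G t = G t₀ := by
      intro t ht
      obtain ⟨e, heE, hlt⟩ := (csInf_lt_iff hEbdd ⟨t₀, htE⟩).mp ht.1
      obtain ⟨e', he'E, hlt'⟩ := (lt_csSup_iff hEbdd' ⟨t₀, htE⟩).mp ht.2
      have htm : t ∈ Set.Icc (0:ℝ) 1 := ⟨heE.1.1.trans hlt.le, hlt'.le.trans he'E.1.2⟩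
      have h1 := hG.2.1 heE.1 htm hlt.le
      have h2 := hG.2.1 htm he'E.1 hlt'.le
      rw [heE.2] at h1; rw [he'E.2] at h2
      linarith
    set ε := min (t₀ - α) (β - t₀) with hεdef
    have hε : 0 < ε := lt_min (by linarith) (by linarith)
    have hball : ∀ s, dist s t₀ < ε → s ∈ Set.Ioo α β := by
      intro s hs
      rw [Real.dist_eq, abs_lt] at hs
      have h1 : ε ≤ t₀ - α := min_le_left _ _
      have h2 : ε ≤ β - t₀ := min_le_right _ _
      exact ⟨by linarith [hs.1], by linarith [hs.2]⟩
    refine ⟨ε, hε, fun t ht => ?_⟩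
    have htball : t ∈ Metric.ball t₀ ε := by simpa [Metric.mem_ball] using ht
    have hnbd : Metric.ball t₀ ε ∈ nhds t := Metric.isOpen_ball.mem_nhds htball
    have heqG : G =ᶠ[nhds t] fun _ => G t₀ := by
      filter_upwards [hnbd] with s hs
      exact hconst s (hball s (by simpa [Metric.mem_ball] using hs))
    have hdG0 : ∀ s ∈ Metric.ball t₀ ε, deriv G s = 0 := by
      intro s hs
      have heqs : G =ᶠ[nhds s] fun _ => G t₀ := by
        filter_upwards [Metric.isOpen_ball.mem_nhds hs] with s' hs'
        exact hconst s' (hball s' (by simpa [Metric.mem_ball] using hs'))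
      rw [heqs.deriv_eq, deriv_const]
    have hrd1 : ∀ s ∈ Metric.ball t₀ ε, rdF F G s = 1 := by
      intro s hs
      simp [rdF, hdG0 s hs]
    have hAeq : wA F G =ᶠ[nhds t] fun _ => genInv 0 1 F (G t₀) := by
      filter_upwards [heqG] with s hs
      simp only [wA, hs]
    have hA0 : HasDerivAt (wA F G) 0 t :=
      (hasDerivAt_const t _).congr_of_eventuallyEq hAeq
    have hR : HasDerivAt (wR F G) 1 t := by
      have := (hasDerivAt_id t).add hA0
      rw [add_zero] at this; exact this
    refine ⟨by rw [hrd1 t htball]; exact hR, by rw [hrd1 t htball], ?_,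
      fun _ => hdG0 t htball⟩
    have : ContinuousAt (fun _ : ℝ => (1:ℝ)) t := continuousAt_const
    refine this.congr ?_
    filter_upwards [hnbd] with s hs
    exact (hrd1 s (by simpa [Metric.mem_ball] using hs)).symm
  · -- G is C¹ near t₀ and genInv F is C¹ near G t₀
    have hopen : IsOpen (Set.Ioo (0:ℝ) 1 \ (SG : Set ℝ)) :=
      isOpen_Ioo.sdiff SG.finite_toSet.isClosed
    obtain ⟨δ₁, hδ₁, hball₁⟩ := Metric.isOpen_iff.mp hopen t₀ ⟨ht₀, hSGn⟩
    obtain ⟨εF, hεF, hpropF⟩ := genInvF_locC1 hF SF hdiffF hdcF (mapsIcc hG ht₀m) hY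
    have hGt₀c : ContinuousAt G t₀ :=
      (hdiffG t₀ ⟨ht₀m, hSGn⟩).continuousAt
    obtain ⟨δ₂, hδ₂, hball₂⟩ := Metric.continuousAt_iff.mp hGt₀c εF hεF
    set ε := min δ₁ δ₂ with hεdef
    have hε : 0 < ε := lt_min hδ₁ hδ₂
    have hsubset : Set.Ioo (0:ℝ) 1 \ (SG : Set ℝ) ⊆ Set.Icc 0 1 \ (SG : Set ℝ) :=
      fun z hz => ⟨⟨hz.1.1.le, hz.1.2.le⟩, hz.2⟩
    refine ⟨ε, hε, fun t ht => ?_⟩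
    have ht1 : t ∈ Set.Ioo (0:ℝ) 1 ∧ t ∉ (SG : Set ℝ) := by
      have := hball₁ (Metric.mem_ball.mpr (lt_of_lt_of_le ht (min_le_left _ _)))
      exact ⟨this.1, this.2⟩
    have ht2 : dist (G t) (G t₀) < εF := hball₂ (lt_of_lt_of_le ht (min_le_right _ _))
    obtain ⟨hinv, hpos, hcontgi, hcontdF⟩ := hpropF (G t) ht2
    have htm : t ∈ Set.Icc (0:ℝ) 1 := ⟨ht1.1.1.le, ht1.1.2.le⟩
    have hdGt : DifferentiableAt ℝ G t := hdiffG t ⟨htm, ht1.2⟩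
    have hdG : HasDerivAt G (deriv G t) t := hdGt.hasDerivAt
    have hA : HasDerivAt (wA F G) ((deriv F (genInv 0 1 F (G t)))⁻¹ * deriv G t) t := by
      exact (hinv.comp t hdG : HasDerivAt (fun s => genInv 0 1 F (G s)) _ t)
    have hR : HasDerivAt (wR F G) (rdF F G t) t := by
      have := (hasDerivAt_id t).add hA
      exact this
    have hdGnn : 0 ≤ deriv G t := deriv_nonneg_of_monotoneOn hG.2.1 ht1.1 hdGt
    have hprod : 0 ≤ (deriv F (genInv 0 1 F (G t)))⁻¹ * deriv G t :=
      mul_nonneg (inv_pos.mpr hpos).le hdGnn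
    have hcdG : ContinuousAt (deriv G) t := by
      refine hdcG.continuousAt (Filter.mem_of_superset ?_ hsubset)
      exact hopen.mem_nhds ht1
    refine ⟨hR, by simp only [rdF]; linarith, ?_, ?_⟩
    · have hc1 : ContinuousAt (fun s => deriv F (genInv 0 1 F (G s))) t :=
        ContinuousAt.comp (hcontdF.comp hcontgi) hdGt.continuousAt
      exact (continuousAt_const.add (((hc1.inv₀ (ne_of_gt hpos)).mul hcdG)))
    · intro h1
      simp only [rdF] at h1
      have h2 : (deriv F (genInv 0 1 F (G t)))⁻¹ * deriv G t = 0 := by linarith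
      rcases mul_eq_zero.mp h2 with h3 | h3
      · exact absurd h3 (ne_of_gt (inv_pos.mpr hpos))
      · exact h3

lemma wGI_lip (hG : InG G) (v v' : ℝ) :
    dist (genInv 0 1 (wR F G) v) (genInv 0 1 (wR F G) v') ≤ dist v v' := by
  wlog h : v' ≤ v generalizing v v'
  · rw [dist_comm, dist_comm v v']; exact this v' v (le_of_not_ge h)
  have h1 := genInv_mono (wR F G) h
  have h2 := genInv_lipschitz (f := wR F G) (wR_exp hG) h
  rw [Real.dist_eq, Real.dist_eq, abs_of_nonneg (by linarith), abs_of_nonneg (by linarith)]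
  linarith

lemma wGI_cont (hG : InG G) : Continuous (fun v => genInv 0 1 (wR F G) v) := by
  refine Metric.continuous_iff.mpr fun v ε hε => ⟨ε, hε, fun v' hv' => ?_⟩
  exact lt_of_le_of_lt (wGI_lip hG v' v) hv'

lemma wH1_cont (hG : InG G) : Continuous (wH1 F G) :=
  (wGI_cont hG).comp (continuous_const.mul continuous_id)

/-- LOC: derivative of `wH1` at good points. -/
lemma wH1_locC1 (hF : InG F) (hG : InG G) (SF SG : Finset ℝ)
    (hdiffF : ∀ x ∈ Set.Icc (0:ℝ) 1 \ SF, DifferentiableAt ℝ F x)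
    (hdcF : ContinuousOn (deriv F) (Set.Icc 0 1 \ SF))
    (hdiffG : ∀ x ∈ Set.Icc (0:ℝ) 1 \ SG, DifferentiableAt ℝ G x)
    (hdcG : ContinuousOn (deriv G) (Set.Icc 0 1 \ SG))
    {u₀ : ℝ} (hu₀ : u₀ ∈ Set.Ioo (0:ℝ) 1) (htn : wH1 F G u₀ ∉ Tbad F G SF SG) :
    HasDerivAt (wH1 F G) ((rdF F G (wH1 F G u₀))⁻¹ * 2) u₀ := by
  set t₀ := wH1 F G u₀ with ht₀def
  have ht₀m : t₀ ∈ Set.Icc (0:ℝ) 1 := wH1_mem F G u₀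
  have ht₀01 : t₀ ∈ Set.Ioo (0:ℝ) 1 := by
    rcases eq_or_lt_of_le ht₀m.1 with h | h
    · exact absurd (Or.inl (Or.inr (show t₀ ∈ ({0,1} : Set ℝ) by simp [← h]))) htn
    rcases eq_or_lt_of_le ht₀m.2 with h' | h'
    · exact absurd (Or.inl (Or.inr (show t₀ ∈ ({0,1} : Set ℝ) by simp [h']))) htn
    exact ⟨h, h'⟩
  obtain ⟨ε, hε, hprop⟩ := wR_locC1 hF hG SF SG hdiffF hdcF hdiffG hdcG ht₀01 htn
  have hself := hprop t₀ (by simpa using hε)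
  -- 2u₀ = wR t₀
  have hge : 2*u₀ ≤ wR F G t₀ := wR_genInv_ge hF hG (by linarith [hu₀.2])
  have heq2u : wR F G t₀ = 2*u₀ := by
    by_contra hc
    have hlt : 2*u₀ < wR F G t₀ := lt_of_le_of_ne hge (Ne.symm hc)
    have hContR : ContinuousAt (wR F G) t₀ := hself.1.continuousAt
    have hev1 : ∀ᶠ s in nhds t₀, 2*u₀ < wR F G s :=
      hContR.eventually (eventually_gt_nhds hlt)
    have hev2 : ∀ᶠ s in nhds t₀, 0 < s := eventually_gt_nhds ht₀01.1
    have hev3 : ∀ᶠ s in nhdsWithin t₀ (Set.Iio t₀), 2*u₀ < wR F G s ∧ 0 < s :=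
      (hev1.and hev2).filter_mono nhdsWithin_le_nhds
    obtain ⟨s, hs, hslt⟩ := (hev3.and self_mem_nhdsWithin).exists
    have hsm : s ∈ Set.Icc (0:ℝ) 1 := ⟨hs.2.le, le_trans hslt.le ht₀m.2⟩
    have h5 : t₀ ≤ s := genInv_le (f := wR F G) (y := 2*u₀) hsm hs.1
    exact absurd (lt_of_le_of_lt h5 hslt) (lt_irrefl _)
  set δ' := min (ε/2) (min (t₀/2) ((1-t₀)/2)) with hδ'def
  have hδ' : 0 < δ' := lt_min (by linarith) (lt_min (by linarith [ht₀01.1]) (by linarith [ht₀01.2]))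
  have hIccball : ∀ s ∈ Set.Icc (t₀ - δ') (t₀ + δ'), dist s t₀ < ε ∧ s ∈ Set.Icc (0:ℝ) 1 := by
    intro s hs
    have h1 : δ' ≤ ε/2 := min_le_left _ _
    have h2 : δ' ≤ t₀/2 := le_trans (min_le_right _ _) (min_le_left _ _)
    have h3 : δ' ≤ (1-t₀)/2 := le_trans (min_le_right _ _) (min_le_right _ _)
    constructor
    · rw [Real.dist_eq, abs_lt]; constructor <;> [linarith [hs.1]; linarith [hs.2]]
    · constructor <;> [linarith [hs.1, ht₀01.1]; linarith [hs.2, ht₀01.2]]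
  have hcontIcc : ContinuousOn (wR F G) (Set.Icc (t₀ - δ') (t₀ + δ')) :=
    fun s hs => ((hprop s (hIccball s hs).1).1.continuousAt).continuousWithinAt
  have hsm' : StrictMonoOn (wR F G) (Set.Icc (t₀ - δ') (t₀ + δ')) := by
    refine strictMonoOn_of_deriv_pos (convex_Icc _ _) hcontIcc ?_
    intro s hs
    rw [interior_Icc] at hs
    have hp := hprop s (hIccball s ⟨hs.1.le, hs.2.le⟩).1
    rw [hp.1.deriv]
    linarith [hp.2.1]
  have hmemIcc : ∀ x, t₀ - δ' ≤ x → x ≤ t₀ + δ' → x ∈ Set.Icc (t₀ - δ') (t₀ + δ') :=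
    fun x h1 h2 => ⟨h1, h2⟩
  have hlow : wR F G (t₀ - δ') < 2*u₀ := by
    rw [← heq2u]
    exact hsm' (hmemIcc _ le_rfl (by linarith)) (hmemIcc _ (by linarith) (by linarith)) (by linarith)
  have hhigh : 2*u₀ < wR F G (t₀ + δ') := by
    rw [← heq2u]
    exact hsm' (hmemIcc _ (by linarith) (by linarith)) (hmemIcc _ (by linarith) le_rfl) (by linarith)
  have hfg : ∀ᶠ w in nhds (2*u₀), wR F G (genInv 0 1 (wR F G) w) = w := by
    have hnbd : Set.Ioo (wR F G (t₀ - δ')) (wR F G (t₀ + δ')) ∈ nhds (2*u₀) :=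
      isOpen_Ioo.mem_nhds ⟨hlow, hhigh⟩
    filter_upwards [hnbd] with w hw
    obtain ⟨x, hxm, hwx⟩ := intermediate_value_Icc (by linarith : t₀ - δ' ≤ t₀ + δ')
      hcontIcc ⟨hw.1.le, hw.2.le⟩
    have hx01 : x ∈ Set.Icc (0:ℝ) 1 := (hIccball x hxm).2
    rw [← hwx, genInv_apply_self (wR_strictMono hG) hx01, hwx]
  have hder : HasDerivAt (wR F G) (rdF F G t₀) (genInv 0 1 (wR F G) (2*u₀)) := by
    have : genInv 0 1 (wR F G) (2*u₀) = t₀ := rfl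
    rw [this]
    exact hself.1
  have hinv : HasDerivAt (fun v => genInv 0 1 (wR F G) v) ((rdF F G t₀)⁻¹) (2*u₀) :=
    HasDerivAt.of_local_left_inverse ((wGI_cont hG).continuousAt) hder
      (by linarith [hself.2.1]) hfg
  have h2u : HasDerivAt (fun u : ℝ => 2*u) (2:ℝ) u₀ := by
    simpa using (hasDerivAt_id u₀).const_mul (2:ℝ)
  exact (hinv.comp u₀ h2u : HasDerivAt (fun u => genInv 0 1 (wR F G) (2*u)) _ u₀)


def PL (F G : ℝ → ℝ) (t : ℝ) : Set ℝ := {u ∈ Set.Icc (0:ℝ) 1 | wH1 F G u = t}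

def badU (F G : ℝ → ℝ) (SF SG : Finset ℝ) : Set ℝ :=
  {0, 1} ∪ ⋃ t ∈ Tbad F G SF SG, {sInf (PL F G t), sSup (PL F G t)}

lemma badU_finite (hF : InG F) (SF SG : Finset ℝ)
    (hdiffF : ∀ x ∈ Set.Icc (0:ℝ) 1 \ SF, DifferentiableAt ℝ F x) :
    (badU F G SF SG).Finite :=
  ((Set.finite_singleton (1:ℝ)).insert 0).union
    (Set.Finite.biUnion (Tbad_finite hF SF SG hdiffF)
      (fun t _ => (Set.finite_singleton _).insert _))

lemma PL_closed (hG : InG G) (t : ℝ) : IsClosed (PL F G t) := by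
  have : PL F G t = Set.Icc 0 1 ∩ wH1 F G ⁻¹' {t} := by
    ext u; simp [PL, Set.mem_preimage]
  rw [this]
  exact isClosed_Icc.inter (isClosed_singleton.preimage (wH1_cont hG))

lemma PL_bddB (t : ℝ) : BddBelow (PL F G t) := ⟨0, fun e he => he.1.1⟩
lemma PL_bddA (t : ℝ) : BddAbove (PL F G t) := ⟨1, fun e he => he.1.2⟩

lemma plateau_const (hG : InG G) {t : ℝ} {u : ℝ}
    (hu : u ∈ Set.Ioo (sInf (PL F G t)) (sSup (PL F G t))) :
    wH1 F G u = t ∧ u ∈ Set.Icc (0:ℝ) 1 := by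
  have hne : (PL F G t).Nonempty := by
    by_contra hc
    rw [Set.not_nonempty_iff_eq_empty] at hc
    rw [hc] at hu
    simp [Real.sInf_empty, Real.sSup_empty] at hu
  have hp : sInf (PL F G t) ∈ PL F G t := (PL_closed hG t).csInf_mem hne (PL_bddB t)
  have hq : sSup (PL F G t) ∈ PL F G t := (PL_closed hG t).csSup_mem hne (PL_bddA t)
  have h1 : wH1 F G (sInf (PL F G t)) = t := hp.2
  have h2 : wH1 F G (sSup (PL F G t)) = t := hq.2
  have hm1 := wH1_mono F G hu.1.le
  have hm2 := wH1_mono F G hu.2.le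
  rw [h1] at hm1; rw [h2] at hm2
  exact ⟨le_antisymm hm2 hm1, ⟨hp.1.1.trans hu.1.le, hu.2.le.trans hq.1.2⟩⟩

lemma plateau_derivs (hG : InG G) {t u : ℝ}
    (hu : u ∈ Set.Ioo (sInf (PL F G t)) (sSup (PL F G t))) :
    deriv (wH1 F G) u = 0 ∧ deriv (wH2 F G) u = 2 ∧ u ∈ Set.Icc (0:ℝ) 1 ∧
    HasDerivAt (wH1 F G) 0 u ∧ HasDerivAt (wH2 F G) 2 u := by
  have hnbd : Set.Ioo (sInf (PL F G t)) (sSup (PL F G t)) ∈ nhds u := isOpen_Ioo.mem_nhds hu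
  have heq : wH1 F G =ᶠ[nhds u] fun _ => t := by
    filter_upwards [hnbd] with u' hu'
    exact (plateau_const hG hu').1
  have heq2 : wH2 F G =ᶠ[nhds u] fun u' => 2*u' - t := by
    filter_upwards [heq] with u' hu'
    simp only [wH2, hu']
  have hd1 : HasDerivAt (wH1 F G) 0 u := (hasDerivAt_const u t).congr_of_eventuallyEq heq
  have hd2 : HasDerivAt (wH2 F G) 2 u := by
    have h0 : HasDerivAt (fun u' : ℝ => 2*u' - t) 2 u := by
      simpa using ((hasDerivAt_id u).const_mul (2:ℝ)).sub_const t
    exact h0.congr_of_eventuallyEq heq2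
  exact ⟨hd1.deriv, hd2.deriv, (plateau_const hG hu).2, hd1, hd2⟩

section Assembly

variable (SF SG : Finset ℝ)

/-- master local regularity lemma at good points -/
lemma master (hF : InG F) (hG : InG G)
    (hdiffF : ∀ x ∈ Set.Icc (0:ℝ) 1 \ SF, DifferentiableAt ℝ F x)
    (hdcF : ContinuousOn (deriv F) (Set.Icc 0 1 \ SF))
    (hdiffG : ∀ x ∈ Set.Icc (0:ℝ) 1 \ SG, DifferentiableAt ℝ G x)
    (hdcG : ContinuousOn (deriv G) (Set.Icc 0 1 \ SG))
    {u₀ : ℝ} (hu₀ : u₀ ∈ Set.Ioo (0:ℝ) 1) (hbad : u₀ ∉ badU F G SF SG) :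
    DifferentiableAt ℝ (wH1 F G) u₀ ∧ ContinuousAt (deriv (wH1 F G)) u₀ ∧
    DifferentiableAt ℝ (wH2 F G) u₀ ∧ ContinuousAt (deriv (wH2 F G)) u₀ ∧
    (wH1 F G u₀ ∈ Tbad F G SF SG →
        deriv (wH1 F G) u₀ = 0 ∧ deriv (wH2 F G) u₀ = 2) ∧
    (wH1 F G u₀ ∉ Tbad F G SF SG →
        0 < deriv (wH1 F G) u₀ ∧
        (deriv (wH2 F G) u₀ = 0 → deriv G (wH1 F G u₀) = 0) ∧
        (deriv G (wH1 F G u₀) = 0 → deriv (wH2 F G) u₀ = 0)) := by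
  set t₀ := wH1 F G u₀ with ht₀def
  by_cases hT : t₀ ∈ Tbad F G SF SG
  · -- case A : plateau interior
    have hu₀PL : u₀ ∈ PL F G t₀ := ⟨⟨hu₀.1.le, hu₀.2.le⟩, rfl⟩
    have hp : sInf (PL F G t₀) ≤ u₀ := csInf_le (PL_bddB t₀) hu₀PL
    have hq : u₀ ≤ sSup (PL F G t₀) := le_csSup (PL_bddA t₀) hu₀PL
    have hne : u₀ ∉ ({sInf (PL F G t₀), sSup (PL F G t₀)} : Set ℝ) :=
      fun hc => hbad (Or.inr (Set.mem_biUnion hT hc))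
    have hplt : sInf (PL F G t₀) < u₀ := lt_of_le_of_ne hp fun hc => hne (Or.inl hc.symm)
    have hqlt : u₀ < sSup (PL F G t₀) := lt_of_le_of_ne hq fun hc => hne (Or.inr hc)
    have hu₀Ioo : u₀ ∈ Set.Ioo (sInf (PL F G t₀)) (sSup (PL F G t₀)) := ⟨hplt, hqlt⟩
    obtain ⟨hd10, hd22, _, hH1, hH2⟩ := plateau_derivs hG hu₀Ioo
    have hnbd : Set.Ioo (sInf (PL F G t₀)) (sSup (PL F G t₀)) ∈ nhds u₀ :=
      isOpen_Ioo.mem_nhds hu₀Ioo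
    have hcont1 : ContinuousAt (deriv (wH1 F G)) u₀ := by
      refine (continuousAt_const : ContinuousAt (fun _ : ℝ => (0:ℝ)) u₀).congr ?_
      filter_upwards [hnbd] with u' hu'
      exact ((plateau_derivs hG hu').1).symm
    have hcont2 : ContinuousAt (deriv (wH2 F G)) u₀ := by
      refine (continuousAt_const : ContinuousAt (fun _ : ℝ => (2:ℝ)) u₀).congr ?_
      filter_upwards [hnbd] with u' hu'
      exact ((plateau_derivs hG hu').2.1).symm
    exact ⟨hH1.differentiableAt, hcont1, hH2.differentiableAt, hcont2,
      fun _ => ⟨hd10, hd22⟩, fun hc => absurd hT hc⟩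
  · -- case B
    have hLOC := wH1_locC1 hF hG SF SG hdiffF hdcF hdiffG hdcG hu₀ hT
    have ht₀01 : t₀ ∈ Set.Ioo (0:ℝ) 1 := by
      have ht₀m : t₀ ∈ Set.Icc (0:ℝ) 1 := wH1_mem F G u₀
      rcases eq_or_lt_of_le ht₀m.1 with h | h
      · exact absurd (Or.inl (Or.inr (show t₀ ∈ ({0,1} : Set ℝ) by simp [← h]))) hT
      rcases eq_or_lt_of_le ht₀m.2 with h' | h'
      · exact absurd (Or.inl (Or.inr (show t₀ ∈ ({0,1} : Set ℝ) by simp [h']))) hT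
      exact ⟨h, h'⟩
    obtain ⟨ε, hε, hprop⟩ := wR_locC1 hF hG SF SG hdiffF hdcF hdiffG hdcG ht₀01 hT
    have hself := hprop t₀ (by simpa using hε)
    have hrdpos : 0 < rdF F G t₀ := lt_of_lt_of_le zero_lt_one hself.2.1
    have hH2 : HasDerivAt (wH2 F G) (2 - (rdF F G t₀)⁻¹ * 2) u₀ := by
      have h2u : HasDerivAt (fun u : ℝ => 2*u) (2:ℝ) u₀ := by
        simpa using (hasDerivAt_id u₀).const_mul (2:ℝ)
      exact h2u.sub hLOC
    -- eventual case B near u₀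
    have hTfin : (Tbad F G SF SG).Finite := Tbad_finite hF SF SG hdiffF
    have hTopen : IsOpen (Tbad F G SF SG)ᶜ := hTfin.isClosed.isOpen_compl
    have hevB : ∀ᶠ u in nhds u₀, u ∈ Set.Ioo (0:ℝ) 1 ∧ wH1 F G u ∉ Tbad F G SF SG := by
      have h1 : Set.Ioo (0:ℝ) 1 ∈ nhds u₀ := isOpen_Ioo.mem_nhds hu₀
      have h2 : wH1 F G ⁻¹' (Tbad F G SF SG)ᶜ ∈ nhds u₀ :=
        ((hTopen.preimage (wH1_cont hG)).mem_nhds hT)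
      filter_upwards [h1, h2] with u hu1 hu2
      exact ⟨hu1, hu2⟩
    have hevd1 : ∀ᶠ u in nhds u₀, deriv (wH1 F G) u = (rdF F G (wH1 F G u))⁻¹ * 2 := by
      filter_upwards [hevB] with u hu
      exact (wH1_locC1 hF hG SF SG hdiffF hdcF hdiffG hdcG hu.1 hu.2).deriv
    have hevd2 : ∀ᶠ u in nhds u₀, deriv (wH2 F G) u = 2 - (rdF F G (wH1 F G u))⁻¹ * 2 := by
      filter_upwards [hevB] with u hu
      have hL := wH1_locC1 hF hG SF SG hdiffF hdcF hdiffG hdcG hu.1 hu.2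
      have h2u : HasDerivAt (fun v : ℝ => 2*v) (2:ℝ) u := by
        simpa using (hasDerivAt_id u).const_mul (2:ℝ)
      exact (h2u.sub hL).deriv
    have hcontform : ContinuousAt (fun u => (rdF F G (wH1 F G u))⁻¹ * 2) u₀ := by
      have h1 : ContinuousAt (rdF F G) t₀ := hself.2.2.1
      have h2 : ContinuousAt (wH1 F G) u₀ := (wH1_cont hG).continuousAt
      have hcomp : ContinuousAt (fun u => rdF F G (wH1 F G u)) u₀ :=
        ContinuousAt.comp (f := wH1 F G) h1 h2
      exact ((hcomp.inv₀ (ne_of_gt hrdpos)).mul continuousAt_const)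
    have hcont1 : ContinuousAt (deriv (wH1 F G)) u₀ :=
      hcontform.congr (hevd1.mono fun u hu => hu.symm)
    have hcont2 : ContinuousAt (deriv (wH2 F G)) u₀ := by
      have : ContinuousAt (fun u => 2 - (rdF F G (wH1 F G u))⁻¹ * 2) u₀ :=
        continuousAt_const.sub hcontform
      exact this.congr (hevd2.mono fun u hu => hu.symm)
    refine ⟨hLOC.differentiableAt, hcont1, hH2.differentiableAt, hcont2,
      fun hc => absurd hc hT, fun _ => ?_⟩
    have hd1 : deriv (wH1 F G) u₀ = (rdF F G t₀)⁻¹ * 2 := hLOC.deriv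
    have hd2 : deriv (wH2 F G) u₀ = 2 - (rdF F G t₀)⁻¹ * 2 := hH2.deriv
    refine ⟨by rw [hd1]; positivity, ?_, ?_⟩
    · intro h0
      rw [hd2] at h0
      have hrd1 : rdF F G t₀ = 1 := by
        have h3 : (rdF F G t₀)⁻¹ = 2⁻¹ * 2 * (rdF F G t₀)⁻¹ := by norm_num
        have h4 : (rdF F G t₀)⁻¹ * 2 = 2 := by linarith
        field_simp at h4
        linarith
      exact hself.2.2.2 hrd1
    · intro h0
      rw [hd2]
      have hone : rdF F G t₀ = 1 := by
        simp only [rdF, h0, mul_zero, add_zero]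
      rw [hone]
      norm_num

end Assembly

lemma mem_Ioo_of_not_badU (SF SG : Finset ℝ) {u : ℝ} (hu : u ∈ Set.Icc (0:ℝ) 1)
    (hbad : u ∉ badU F G SF SG) : u ∈ Set.Ioo (0:ℝ) 1 := by
  constructor
  · exact lt_of_le_of_ne hu.1 fun h =>
      hbad (Or.inl (show u ∈ ({0,1} : Set ℝ) by simp [← h]))
  · exact lt_of_le_of_ne hu.2 fun h =>
      hbad (Or.inl (show u ∈ ({0,1} : Set ℝ) by simp [h]))

lemma plateau_interior (SF SG : Finset ℝ) {u : ℝ} (hu : u ∈ Set.Icc (0:ℝ) 1)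
    (hbad : u ∉ badU F G SF SG) (hT : wH1 F G u ∈ Tbad F G SF SG) :
    u ∈ Set.Ioo (sInf (PL F G (wH1 F G u))) (sSup (PL F G (wH1 F G u))) := by
  have huPL : u ∈ PL F G (wH1 F G u) := ⟨hu, rfl⟩
  have hp : sInf (PL F G (wH1 F G u)) ≤ u := csInf_le (PL_bddB _) huPL
  have hq : u ≤ sSup (PL F G (wH1 F G u)) := le_csSup (PL_bddA _) huPL
  have hne : u ∉ ({sInf (PL F G (wH1 F G u)), sSup (PL F G (wH1 F G u))} : Set ℝ) :=
    fun hc => hbad (Or.inr (Set.mem_biUnion hT hc))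
  exact ⟨lt_of_le_of_ne hp fun hc => hne (Or.inl hc.symm),
    lt_of_le_of_ne hq fun hc => hne (Or.inr hc)⟩

lemma wH1_pc1 (hF : InG F) (hG : InG G) (SF SG : Finset ℝ)
    (hdiffF : ∀ x ∈ Set.Icc (0:ℝ) 1 \ SF, DifferentiableAt ℝ F x)
    (hdcF : ContinuousOn (deriv F) (Set.Icc 0 1 \ SF))
    (hdiffG : ∀ x ∈ Set.Icc (0:ℝ) 1 \ SG, DifferentiableAt ℝ G x)
    (hdcG : ContinuousOn (deriv G) (Set.Icc 0 1 \ SG)) : PiecewiseC1 (wH1 F G) := by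
  refine ⟨(wH1_cont hG).continuousOn, (badU_finite (G := G) hF SF SG hdiffF).toFinset, ?_, ?_⟩
  · intro u hu
    rw [Set.mem_diff, Set.Finite.coe_toFinset] at hu
    exact (master SF SG hF hG hdiffF hdcF hdiffG hdcG
      (mem_Ioo_of_not_badU SF SG hu.1 hu.2) hu.2).1
  · intro u hu
    rw [Set.mem_diff, Set.Finite.coe_toFinset] at hu
    exact ((master SF SG hF hG hdiffF hdcF hdiffG hdcG
      (mem_Ioo_of_not_badU SF SG hu.1 hu.2) hu.2).2.1).continuousWithinAt

lemma wH2_pc1 (hF : InG F) (hG : InG G) (SF SG : Finset ℝ)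
    (hdiffF : ∀ x ∈ Set.Icc (0:ℝ) 1 \ SF, DifferentiableAt ℝ F x)
    (hdcF : ContinuousOn (deriv F) (Set.Icc 0 1 \ SF))
    (hdiffG : ∀ x ∈ Set.Icc (0:ℝ) 1 \ SG, DifferentiableAt ℝ G x)
    (hdcG : ContinuousOn (deriv G) (Set.Icc 0 1 \ SG)) : PiecewiseC1 (wH2 F G) := by
  refine ⟨?_, (badU_finite (G := G) hF SF SG hdiffF).toFinset, ?_, ?_⟩
  · exact ((continuous_const.mul continuous_id).sub (wH1_cont hG)).continuousOn
  · intro u hu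
    rw [Set.mem_diff, Set.Finite.coe_toFinset] at hu
    exact (master SF SG hF hG hdiffF hdcF hdiffG hdcG
      (mem_Ioo_of_not_badU SF SG hu.1 hu.2) hu.2).2.2.1
  · intro u hu
    rw [Set.mem_diff, Set.Finite.coe_toFinset] at hu
    exact ((master SF SG hF hG hdiffF hdcF hdiffG hdcG
      (mem_Ioo_of_not_badU SF SG hu.1 hu.2) hu.2).2.2.2.1).continuousWithinAt

lemma wH1_ff (hF : InG F) (hG : InG G) (SF SG : Finset ℝ)
    (hdiffF : ∀ x ∈ Set.Icc (0:ℝ) 1 \ SF, DifferentiableAt ℝ F x)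
    (hdcF : ContinuousOn (deriv F) (Set.Icc 0 1 \ SF))
    (hdiffG : ∀ x ∈ Set.Icc (0:ℝ) 1 \ SG, DifferentiableAt ℝ G x)
    (hdcG : ContinuousOn (deriv G) (Set.Icc 0 1 \ SG)) : FiniteFlats (wH1 F G) := by
  set Z := {y ∈ Set.Icc (0:ℝ) 1 | deriv (wH1 F G) y = 0} with hZ
  refine components_finite
    (((fun b => {b} ∩ Z) '' badU F G SF SG) ∪
     ((fun t => Set.Ioo (sInf (PL F G t)) (sSup (PL F G t))) '' Tbad F G SF SG))
    ?_ ?_ ?_ ?_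
  · exact (((badU_finite hF SF SG hdiffF).image _).union
      ((Tbad_finite hF SF SG hdiffF).image _))
  · rintro P (⟨b, _, rfl⟩ | ⟨t, _, rfl⟩)
    · exact ((Set.subsingleton_singleton).anti Set.inter_subset_left).isPreconnected
    · exact isPreconnected_Ioo
  · rintro P (⟨b, _, rfl⟩ | ⟨t, _, rfl⟩)
    · exact Set.inter_subset_right
    · intro u hu
      obtain ⟨h1, _, h3, _, _⟩ := plateau_derivs (F := F) hG hu
      exact ⟨h3, h1⟩
  · rintro u ⟨huIcc, hud⟩
    by_cases hbad : u ∈ badU F G SF SG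
    · exact ⟨{u} ∩ Z, Or.inl ⟨u, hbad, rfl⟩, rfl, ⟨huIcc, hud⟩⟩
    · by_cases hT : wH1 F G u ∈ Tbad F G SF SG
      · exact ⟨_, Or.inr ⟨wH1 F G u, hT, rfl⟩, plateau_interior SF SG huIcc hbad hT⟩
      · have := ((master SF SG hF hG hdiffF hdcF hdiffG hdcG
          (mem_Ioo_of_not_badU SF SG huIcc hbad) hbad).2.2.2.2.2 hT).1
        rw [hud] at this
        exact absurd this (lt_irrefl 0)

lemma wH2_ff (hF : InG F) (hG : InG G) (SF SG : Finset ℝ)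
    (hdiffF : ∀ x ∈ Set.Icc (0:ℝ) 1 \ SF, DifferentiableAt ℝ F x)
    (hdcF : ContinuousOn (deriv F) (Set.Icc 0 1 \ SF))
    (hdiffG : ∀ x ∈ Set.Icc (0:ℝ) 1 \ SG, DifferentiableAt ℝ G x)
    (hdcG : ContinuousOn (deriv G) (Set.Icc 0 1 \ SG)) : FiniteFlats (wH2 F G) := by
  set Z := {y ∈ Set.Icc (0:ℝ) 1 | deriv (wH2 F G) y = 0} with hZ
  set ZG := {y ∈ Set.Icc (0:ℝ) 1 | deriv G y = 0} with hZG
  set comps := {C : Set ℝ | ∃ x ∈ ZG, C = connectedComponentIn ZG x} with hcomps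
  have hcompsfin : comps.Finite := hG.1.2
  set Js : Set (Set ℝ) :=
    ((fun t => Set.Icc (sInf (PL F G t)) (sSup (PL F G t))) '' Tbad F G SF SG) ∪
    ((fun b => ({b} : Set ℝ)) '' badU F G SF SG) with hJs
  have hJsfin : Js.Finite := ((Tbad_finite hF SF SG hdiffF).image _).union
    ((badU_finite hF SF SG hdiffF).image _)
  have hJsord : ∀ J ∈ Js, J.OrdConnected := by
    rintro J (⟨t, _, rfl⟩ | ⟨b, _, rfl⟩)
    · exact Set.ordConnected_Icc
    · exact Set.ordConnected_singleton
  have hICord : ∀ C ∈ comps, ({u ∈ Set.Icc (0:ℝ) 1 | wH1 F G u ∈ C} : Set ℝ).OrdConnected := by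
    rintro C ⟨x, hx, rfl⟩
    have hCord : (connectedComponentIn ZG x).OrdConnected :=
      (isPreconnected_connectedComponentIn).ordConnected
    constructor
    intro a ha b hb z hz
    refine ⟨Set.ordConnected_Icc.out ha.1 hb.1 hz, ?_⟩
    exact hCord.out ha.2 hb.2 ⟨wH1_mono F G hz.1, wH1_mono F G hz.2⟩
  have hpieces : ∀ C ∈ comps, ∃ PsC : Set (Set ℝ), PsC.Finite ∧
      (∀ P ∈ PsC, P.OrdConnected) ∧
      ({u ∈ Set.Icc (0:ℝ) 1 | wH1 F G u ∈ C} : Set ℝ) \ ⋃₀ Js = ⋃₀ PsC :=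
    fun C hC => diff_finite_ordConnected (hICord C hC) Js hJsfin hJsord
  choose! PsC hPsCfin hPsCord hPsCeq using hpieces
  -- the key inclusion
  have hsubZ : ∀ C ∈ comps, ({u ∈ Set.Icc (0:ℝ) 1 | wH1 F G u ∈ C} : Set ℝ) \ ⋃₀ Js ⊆ Z := by
    rintro C hC u ⟨⟨huIcc, huC⟩, hunJ⟩
    have hbad : u ∉ badU F G SF SG := fun hc =>
      hunJ ⟨{u}, Or.inr ⟨u, hc, rfl⟩, rfl⟩
    have hT : wH1 F G u ∉ Tbad F G SF SG := by
      intro hc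
      refine hunJ ⟨_, Or.inl ⟨wH1 F G u, hc, rfl⟩, ?_⟩
      have huPL : u ∈ PL F G (wH1 F G u) := ⟨huIcc, rfl⟩
      exact ⟨csInf_le (PL_bddB _) huPL, le_csSup (PL_bddA _) huPL⟩
    have hZGmem : wH1 F G u ∈ ZG := by
      obtain ⟨x, hx, rfl⟩ := hC
      exact connectedComponentIn_subset ZG x huC
    have := ((master SF SG hF hG hdiffF hdcF hdiffG hdcG
      (mem_Ioo_of_not_badU SF SG huIcc hbad) hbad).2.2.2.2.2 hT).2.2 hZGmem.2
    exact ⟨huIcc, this⟩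
  refine components_finite
    (((fun b => {b} ∩ Z) '' badU F G SF SG) ∪ (⋃ C ∈ comps, PsC C)) ?_ ?_ ?_ ?_
  · exact ((badU_finite hF SF SG hdiffF).image _).union
      (Set.Finite.biUnion hcompsfin fun C hC => hPsCfin C hC)
  · rintro P (⟨b, _, rfl⟩ | hP)
    · exact ((Set.subsingleton_singleton).anti Set.inter_subset_left).isPreconnected
    · simp only [Set.mem_iUnion] at hP
      obtain ⟨C, hC, hPC⟩ := hP
      exact (hPsCord C hC P hPC).isPreconnected
  · rintro P (⟨b, _, rfl⟩ | hP)
    · exact Set.inter_subset_right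
    · simp only [Set.mem_iUnion] at hP
      obtain ⟨C, hC, hPC⟩ := hP
      refine subset_trans ?_ (hsubZ C hC)
      rw [hPsCeq C hC]
      exact fun z hz => ⟨P, hPC, hz⟩
  · rintro u ⟨huIcc, hud⟩
    by_cases hbad : u ∈ badU F G SF SG
    · exact ⟨{u} ∩ Z, Or.inl ⟨u, hbad, rfl⟩, rfl, ⟨huIcc, hud⟩⟩
    · have hu01 := mem_Ioo_of_not_badU (F := F) (G := G) SF SG huIcc hbad
      by_cases hT : wH1 F G u ∈ Tbad F G SF SG
      · have := ((master SF SG hF hG hdiffF hdcF hdiffG hdcG hu01 hbad).2.2.2.2.1 hT).2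
        rw [hud] at this
        norm_num at this
      · have hdG0 := ((master SF SG hF hG hdiffF hdcF hdiffG hdcG
          hu01 hbad).2.2.2.2.2 hT).2.1 hud
        have hZGmem : wH1 F G u ∈ ZG := ⟨wH1_mem F G u, hdG0⟩
        have hC : connectedComponentIn ZG (wH1 F G u) ∈ comps := ⟨wH1 F G u, hZGmem, rfl⟩
        have huIC : u ∈ ({u' ∈ Set.Icc (0:ℝ) 1 | wH1 F G u' ∈ connectedComponentIn ZG (wH1 F G u)} : Set ℝ) :=
          ⟨huIcc, mem_connectedComponentIn hZGmem⟩
        have hunJ : u ∉ ⋃₀ Js := by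
          rintro ⟨J, hJ, huJ⟩
          rcases hJ with ⟨t', ht', rfl⟩ | ⟨b, hb, rfl⟩
          · -- u in the plateau hull of a bad t'
            simp only [Set.mem_Icc] at huJ
            have hne : (PL F G t').Nonempty := by
              by_contra hc
              rw [Set.not_nonempty_iff_eq_empty] at hc
              rw [hc, Real.sInf_empty, Real.sSup_empty] at huJ
              have := hu01.1
              linarith [huJ.1, huJ.2]
            have hp := (PL_closed (F := F) hG t').csInf_mem hne (PL_bddB t')
            have hq := (PL_closed (F := F) hG t').csSup_mem hne (PL_bddA t')
            have h1 := wH1_mono F G huJ.1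
            have h2 := wH1_mono F G huJ.2
            rw [hp.2] at h1; rw [hq.2] at h2
            have : wH1 F G u = t' := le_antisymm h2 h1
            rw [this] at hT
            exact hT ht'
          · simp only [Set.mem_singleton_iff] at huJ
            rw [huJ] at hbad
            exact hbad hb
        have : u ∈ ⋃₀ PsC (connectedComponentIn ZG (wH1 F G u)) := by
          rw [← hPsCeq _ hC]
          exact ⟨huIC, hunJ⟩
        obtain ⟨P, hP, huP⟩ := this
        refine ⟨P, Or.inr ?_, huP⟩
        simp only [Set.mem_iUnion]
        exact ⟨_, hC, hP⟩

lemma wH1_InG (hF : InG F) (hG : InG G) (SF SG : Finset ℝ)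
    (hdiffF : ∀ x ∈ Set.Icc (0:ℝ) 1 \ SF, DifferentiableAt ℝ F x)
    (hdcF : ContinuousOn (deriv F) (Set.Icc 0 1 \ SF))
    (hdiffG : ∀ x ∈ Set.Icc (0:ℝ) 1 \ SG, DifferentiableAt ℝ G x)
    (hdcG : ContinuousOn (deriv G) (Set.Icc 0 1 \ SG)) : InG (wH1 F G) :=
  ⟨⟨wH1_pc1 hF hG SF SG hdiffF hdcF hdiffG hdcG, wH1_ff hF hG SF SG hdiffF hdcF hdiffG hdcG⟩,
    (wH1_mono F G).monotoneOn _, wH1_zero hG, wH1_one hF hG⟩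

lemma wH2_InG (hF : InG F) (hG : InG G) (SF SG : Finset ℝ)
    (hdiffF : ∀ x ∈ Set.Icc (0:ℝ) 1 \ SF, DifferentiableAt ℝ F x)
    (hdcF : ContinuousOn (deriv F) (Set.Icc 0 1 \ SF))
    (hdiffG : ∀ x ∈ Set.Icc (0:ℝ) 1 \ SG, DifferentiableAt ℝ G x)
    (hdcG : ContinuousOn (deriv G) (Set.Icc 0 1 \ SG)) : InG (wH2 F G) :=
  ⟨⟨wH2_pc1 hF hG SF SG hdiffF hdcF hdiffG hdcG, wH2_ff hF hG SF SG hdiffF hdcF hdiffG hdcG⟩,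
    wH2_mono hG, wH2_zero hG, wH2_one hF hG⟩

end GC

/-- if `G ∘ h̃₁ = F ∘ h̃₂` on `[0,1]` for `F, G, h̃₁, h̃₂ ∈ 𝒢`, then there
exist `h₁, h₂ ∈ 𝒢` with `G ∘ h₁ = F ∘ h₂` on `[0,1]` whose curve `u ↦ (h₁ u, h₂ u)`
contains the graph of `F† ∘ G`. -/
theorem graph_in_curve (F G ht₁ ht₂ : ℝ → ℝ)
    (hF : InG F) (hG : InG G) (hht₁ : InG ht₁) (hht₂ : InG ht₂)
    (hmatch : ∀ t ∈ Set.Icc (0:ℝ) 1, G (ht₁ t) = F (ht₂ t)) :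
    ∃ h₁ h₂ : ℝ → ℝ, InG h₁ ∧ InG h₂ ∧
      (∀ t ∈ Set.Icc (0:ℝ) 1, G (h₁ t) = F (h₂ t)) ∧
      (∀ t ∈ Set.Icc (0:ℝ) 1, ∃ u ∈ Set.Icc (0:ℝ) 1,
        h₁ u = t ∧ h₂ u = genInv 0 1 F (G t)) := by
  obtain ⟨SF, hdiffF, hdcF⟩ := hF.1.1.2
  obtain ⟨SG, hdiffG, hdcG⟩ := hG.1.1.2
  refine ⟨GC.wH1 F G, GC.wH2 F G, GC.wH1_InG hF hG SF SG hdiffF hdcF hdiffG hdcG,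
    GC.wH2_InG hF hG SF SG hdiffF hdcF hdiffG hdcG,
    fun t ht => GC.wMatch hF hG ht, fun t ht => ?_⟩
  refine ⟨GC.wR F G t / 2, ⟨?_, ?_⟩, (GC.wH1_graph hG ht).1, (GC.wH1_graph hG ht).2⟩
  · linarith [GC.wR_ge_id (F := F) (G := G) t, ht.1]
  · linarith [GC.wR_le_two hF hG ht]
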